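/- arXiv:2512.24025 — 9 statements merged into one kernel-verified Lean document; each statement's English description precedes it below -/
import Mathlib

section
/- A filtered vector space (V, ℓ) over a field κ satisfies the best approximation property if and only if the image ℓ(V ∖ {0}) is a well-ordered subset of ℝ. -/
universe u v

/-- `ℓ` is a filtration function making `(V, ℓ)` a filtered vector space over `κ`:
`ℓ v = ⊥` (i.e. `-∞`) iff `v = 0`; `ℓ` is invariant under scaling by nonzero scalars;
and `ℓ (v + w) ≤ max (ℓ v) (ℓ w)`. -/
def IsFiltrationFunction (κ : Type u) [Field κ] {V : Type v} [AddCommGroup V] [Module κ V]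
    (ℓ : V → WithBot ℝ) : Prop :=
  (∀ v : V, ℓ v = ⊥ ↔ v = 0) ∧
    (∀ (c : κ) (v : V), c ≠ 0 → ℓ (c • v) = ℓ v) ∧
      ∀ v w : V, ℓ (v + w) ≤ max (ℓ v) (ℓ w)

/-- The best approximation property of a filtered vector space `(V, ℓ)`: for every
subspace `W` and every `v ∉ W` there is a best approximation `w₀ ∈ W` to `v`. -/
def HasBestApprox (κ : Type u) [Field κ] {V : Type v} [AddCommGroup V] [Module κ V]
    (ℓ : V → WithBot ℝ) : Prop :=
  ∀ (W : Submodule κ V) (v : V), v ∉ W → ∃ w₀ ∈ W, ∀ w ∈ W, ℓ (v - w₀) ≤ ℓ (v - w)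

/-- A subset of `ℝ` is well-ordered if every nonempty subset of it has a least element. -/
def WellOrderedSubset (s : Set ℝ) : Prop :=
  ∀ t : Set ℝ, t ⊆ s → t.Nonempty → ∃ a ∈ t, ∀ b ∈ t, a ≤ b

section Helpers

variable {κ : Type u} [Field κ] {V : Type v} [AddCommGroup V] [Module κ V]
variable {ℓ : V → WithBot ℝ}

lemma ell_zero (hℓ : IsFiltrationFunction κ ℓ) : ℓ (0 : V) = ⊥ := (hℓ.1 0).mpr rfl

lemma ell_smul (hℓ : IsFiltrationFunction κ ℓ) {c : κ} (hc : c ≠ 0) (v : V) : ℓ (c • v) = ℓ v :=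
  hℓ.2.1 c v hc

lemma ell_neg (hℓ : IsFiltrationFunction κ ℓ) (b : V) : ℓ (-b) = ℓ b := by
  have h := hℓ.2.1 (-1 : κ) b (neg_ne_zero.mpr one_ne_zero)
  simpa using h

lemma ell_add_eq (hℓ : IsFiltrationFunction κ ℓ) {a b : V} (h : ℓ b < ℓ a) : ℓ (a + b) = ℓ a := by
  refine le_antisymm ((hℓ.2.2 a b).trans_eq (max_eq_left h.le)) ?_
  have h2 : ℓ a ≤ max (ℓ (a + b)) (ℓ b) := by
    have h3 := hℓ.2.2 (a + b) (-b)
    rw [add_neg_cancel_right, ell_neg hℓ] at h3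
    exact h3
  exact (le_max_iff.mp h2).resolve_right (not_le.mpr h)

lemma ell_sum_le (hℓ : IsFiltrationFunction κ ℓ) (s : Finset ℕ) (f : ℕ → V) :
    ℓ (∑ i ∈ s, f i) ≤ s.sup (fun i => ℓ (f i)) := by
  classical
  induction s using Finset.induction_on with
  | empty => simp [ell_zero hℓ]
  | @insert a s ha ih =>
    rw [Finset.sum_insert ha, Finset.sup_insert]
    exact (hℓ.2.2 _ _).trans (max_le_max le_rfl ih)

lemma ell_combo (hℓ : IsFiltrationFunction κ ℓ) (v : ℕ → V) (t : ℕ → ℝ) (ht : StrictAnti t)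
    (hv : ∀ n, ℓ (v n) = (t n : WithBot ℝ)) {s : Finset ℕ} (hs : s.Nonempty)
    {c : ℕ → κ} (hc : ∀ i ∈ s, c i ≠ 0) :
    ℓ (∑ i ∈ s, c i • v i) = (t (s.min' hs) : WithBot ℝ) := by
  classical
  set m := s.min' hs with hm
  have hms : m ∈ s := s.min'_mem hs
  rw [← Finset.add_sum_erase _ _ hms]
  have hrest : ℓ (∑ i ∈ s.erase m, c i • v i) < (t m : WithBot ℝ) := by
    refine (ell_sum_le hℓ _ _).trans_lt ?_
    rw [Finset.sup_lt_iff (WithBot.bot_lt_coe _)]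
    intro i hi
    rw [ell_smul hℓ (hc i (Finset.mem_of_mem_erase hi)), hv i]
    have hmi : m < i :=
      lt_of_le_of_ne (s.min'_le i (Finset.mem_of_mem_erase hi))
        (Ne.symm (Finset.ne_of_mem_erase hi))
    exact_mod_cast ht hmi
  have hhead : ℓ (c m • v m) = (t m : WithBot ℝ) := by
    rw [ell_smul hℓ (hc m hms), hv m]
  rw [ell_add_eq hℓ (hhead ▸ hrest), hhead]

end Helpers

/-- A filtered vector space `(V, ℓ)` over a field `κ` satisfies the best approximation
property if and only if the image `ℓ(V ∖ {0})` is a well-ordered subset of `ℝ`. -/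
theorem hasBestApprox_iff_wellOrderedSubset (κ : Type u) [Field κ] {V : Type v}
    [AddCommGroup V] [Module κ V] (ℓ : V → WithBot ℝ) (hℓ : IsFiltrationFunction κ ℓ) :
    HasBestApprox κ ℓ ↔
      WellOrderedSubset {t : ℝ | ∃ v : V, v ≠ 0 ∧ ℓ v = (t : WithBot ℝ)} := by
  classical
  constructor
  · -- best approximation ⇒ well-ordered
    intro hba T hTsub hTne
    by_contra hno
    push_neg at hno
    obtain ⟨t0, ht0⟩ := hTne
    have hstep : ∀ p : T, ∃ q : T, (q : ℝ) < (p : ℝ) := fun p => by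
      obtain ⟨b, hb, hlt⟩ := hno p p.2
      exact ⟨⟨b, hb⟩, hlt⟩
    choose F hF using hstep
    set seq : ℕ → T := fun n => F^[n] ⟨t0, ht0⟩ with hseqdef
    set t : ℕ → ℝ := fun n => (seq n : ℝ) with htdef
    have hanti : StrictAnti t := strictAnti_nat_of_succ_lt fun n => by
      have h1 : seq (n + 1) = F (seq n) := Function.iterate_succ_apply' F n _
      show (seq (n + 1) : ℝ) < (seq n : ℝ)
      rw [h1]
      exact hF (seq n)
    have hmem : ∀ n, ∃ u : V, u ≠ 0 ∧ ℓ u = ((t n : ℝ) : WithBot ℝ) := fun n =>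
      hTsub (seq n).2
    choose u hu0 hu using hmem
    set g : ℕ → V := fun n => u 0 - u (n + 1) with hgdef
    set W : Submodule κ V := Submodule.span κ (Set.range g) with hWdef
    -- every element of the affine coset u 0 - W has ℓ-value t m for some m
    have claim : ∀ w ∈ W, ∃ m : ℕ, ℓ (u 0 - w) = (t m : WithBot ℝ) := by
      intro w hw
      rw [hWdef, Finsupp.mem_span_range_iff_exists_finsupp] at hw
      obtain ⟨c, hc⟩ := hw
      set S : κ := ∑ n ∈ c.support, c n with hSdef
      have hexp : u 0 - w = (1 - S) • u 0 + ∑ n ∈ c.support, c n • u (n + 1) := by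
        rw [← hc, Finsupp.sum]
        simp only [hgdef, smul_sub, Finset.sum_sub_distrib, sub_smul, one_smul,
          ← Finset.sum_smul, ← hSdef]
        abel
      have hsum_image : ∀ d : ℕ → κ,
          ∑ i ∈ c.support.image Nat.succ, d i • u i = ∑ n ∈ c.support, d (n + 1) • u (n + 1) := by
        intro d
        rw [Finset.sum_image (fun x _ y _ h => Nat.succ_injective h)]
      by_cases hS : S = 1
      · have hcs : c.support.Nonempty := by
          rcases Finset.eq_empty_or_nonempty c.support with h | h
          · rw [hSdef, h, Finset.sum_empty] at hS
            exact absurd hS.symm one_ne_zero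
          · exact h
        have hne2 : (c.support.image Nat.succ).Nonempty := hcs.image _
        have heq : u 0 - w = ∑ i ∈ c.support.image Nat.succ, c (i - 1) • u i := by
          rw [hexp, hS, sub_self, zero_smul, zero_add, hsum_image]
          simp
        refine ⟨(c.support.image Nat.succ).min' hne2, ?_⟩
        rw [heq]
        refine ell_combo hℓ u t hanti hu hne2 ?_
        intro i hi
        obtain ⟨n, hn, rfl⟩ := Finset.mem_image.mp hi
        simpa using Finsupp.mem_support_iff.mp hn
      · set d : ℕ → κ := fun i => if i = 0 then 1 - S else c (i - 1) with hddef
        have h0not : (0 : ℕ) ∉ c.support.image Nat.succ := by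
          simp [Finset.mem_image]
        set s3 : Finset ℕ := insert 0 (c.support.image Nat.succ) with hs3def
        have hne3 : s3.Nonempty := ⟨0, Finset.mem_insert_self _ _⟩
        have heq : u 0 - w = ∑ i ∈ s3, d i • u i := by
          rw [hs3def, Finset.sum_insert h0not]
          have : ∑ i ∈ c.support.image Nat.succ, d i • u i
              = ∑ n ∈ c.support, c n • u (n + 1) := by
            rw [hsum_image]
            exact Finset.sum_congr rfl fun n _ => by simp [hddef]
          rw [this, hexp]
          simp [hddef]
        refine ⟨s3.min' hne3, ?_⟩
        rw [heq]
        refine ell_combo hℓ u t hanti hu hne3 ?_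
        intro i hi
        rcases Finset.mem_insert.mp hi with rfl | hi
        · simp only [hddef, if_pos rfl]
          exact sub_ne_zero.mpr fun h => hS h.symm
        · obtain ⟨n, hn, rfl⟩ := Finset.mem_image.mp hi
          simp only [hddef, Nat.succ_ne_zero, if_false]
          simpa using Finsupp.mem_support_iff.mp hn
    have hv0 : u 0 ∉ W := by
      intro h
      obtain ⟨m, hm⟩ := claim (u 0) h
      rw [sub_self, ell_zero hℓ] at hm
      exact WithBot.bot_ne_coe hm
    obtain ⟨w₀, hw₀W, hbest⟩ := hba W (u 0) hv0
    obtain ⟨m, hm⟩ := claim w₀ hw₀W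
    have hgm : g m ∈ W := Submodule.subset_span ⟨m, rfl⟩
    have hle := hbest (g m) hgm
    have h2 : u 0 - g m = u (m + 1) := sub_sub_cancel _ _
    rw [hm, h2, hu (m + 1)] at hle
    exact absurd (WithBot.coe_le_coe.mp hle) (not_le.mpr (hanti (Nat.lt_succ_self m)))
  · -- well-ordered ⇒ best approximation
    intro hwo W v hv
    set T : Set ℝ := {s : ℝ | ∃ w ∈ W, ℓ (v - w) = (s : WithBot ℝ)} with hTdef
    have hsub : T ⊆ {t : ℝ | ∃ u : V, u ≠ 0 ∧ ℓ u = (t : WithBot ℝ)} := by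
      rintro s ⟨w, hw, hws⟩
      refine ⟨v - w, ?_, hws⟩
      intro h
      exact hv (sub_eq_zero.mp h ▸ hw)
    have hvne : ℓ v ≠ ⊥ := by
      intro h
      exact hv ((hℓ.1 v).mp h ▸ W.zero_mem)
    obtain ⟨s0, hs0⟩ := WithBot.ne_bot_iff_exists.mp hvne
    have hTne : T.Nonempty := ⟨s0, 0, W.zero_mem, by rw [sub_zero]; exact hs0.symm⟩
    obtain ⟨a, ⟨w₀, hw₀, ha⟩, hleast⟩ := hwo T hsub hTne
    refine ⟨w₀, hw₀, fun w hw => ?_⟩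
    have hne : ℓ (v - w) ≠ ⊥ := by
      intro h
      have : v - w = 0 := (hℓ.1 _).mp h
      exact hv (sub_eq_zero.mp this ▸ hw)
    obtain ⟨s, hs⟩ := WithBot.ne_bot_iff_exists.mp hne
    have hsT : s ∈ T := ⟨w, hw, hs.symm⟩
    rw [ha, ← hs]
    exact_mod_cast hleast s hsT
end

section
/- Let (V, ℓ) be a filtered vector space over a field κ, let S be an ℓ-orthogonal subset of V, and let W = span(S). Suppose that v ∈ V ∖ W and w₀ ∈ W have the property that ℓ(v − w₀) ≤ ℓ(v − w) for all w ∈ W. Then S ∪ {v − w₀} is still an ℓ-orthogonal subset of V. -/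
open scoped Classical

universe u v

/-- `ℓ` is a filtration function making `(V, ℓ)` a filtered vector space over `κ`. -/
def IsFiltrationFn (κ : Type u) [Field κ] {V : Type v} [AddCommGroup V] [Module κ V]
    (ℓ : V → WithBot ℝ) : Prop :=
  (∀ v : V, ℓ v = ⊥ ↔ v = 0) ∧
    (∀ (c : κ) (v : V), c ≠ 0 → ℓ (c • v) = ℓ v) ∧
      ∀ v w : V, ℓ (v + w) ≤ max (ℓ v) (ℓ w)

/-- A subset `S ⊆ V ∖ {0}` is `ℓ`-orthogonal: for any finitely many distinct elements
`v₁, …, vₙ` of `S` and scalars `c₁, …, cₙ`, `ℓ (∑ cᵢ • vᵢ) = max {ℓ vᵢ : cᵢ ≠ 0}`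
(the max of the empty set being `⊥ = -∞`). -/
def IsOrthogonal (κ : Type u) [Field κ] {V : Type v} [AddCommGroup V] [Module κ V]
    (ℓ : V → WithBot ℝ) (S : Set V) : Prop :=
  (0 : V) ∉ S ∧
    ∀ T : Finset V, (T : Set V) ⊆ S → ∀ c : V → κ,
      ℓ (∑ v ∈ T, c v • v) = (T.filter fun v => c v ≠ 0).sup ℓ

/-- If `S` is an `ℓ`-orthogonal subset, `W = span S`, `v ∉ W`, and `w₀ ∈ W` is a best
approximation to `v` from `W`, then `S ∪ {v - w₀}` is still `ℓ`-orthogonal. -/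
theorem isOrthogonal_union_singleton_of_bestApprox (κ : Type u) [Field κ] {V : Type v}
    [AddCommGroup V] [Module κ V] (ℓ : V → WithBot ℝ) (hℓ : IsFiltrationFn κ ℓ)
    (S : Set V) (hS : IsOrthogonal κ ℓ S) (v w₀ : V)
    (hv : v ∉ Submodule.span κ S) (hw₀ : w₀ ∈ Submodule.span κ S)
    (hbest : ∀ w ∈ Submodule.span κ S, ℓ (v - w₀) ≤ ℓ (v - w)) :
    IsOrthogonal κ ℓ (S ∪ {v - w₀}) := by
  obtain ⟨hbot, hsmul, hadd⟩ := hℓ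
  obtain ⟨h0S, hSsum⟩ := hS
  set u : V := v - w₀ with hu
  have huspan : u ∉ Submodule.span κ S := by
    intro h
    exact hv (by simpa [hu] using Submodule.add_mem _ h hw₀)
  have hune : u ≠ 0 := fun h => huspan (h ▸ Submodule.zero_mem _)
  have huS : u ∉ S := fun h => huspan (Submodule.subset_span h)
  have hneg : ∀ x : V, ℓ (-x) = ℓ x := by
    intro x
    rw [← neg_one_smul κ x]
    exact hsmul (-1) x (by norm_num)
  -- key claim
  have key : ∀ w' ∈ Submodule.span κ S, ℓ (u + w') = max (ℓ u) (ℓ w') := by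
    intro w' hw'
    have h1 : ℓ u ≤ ℓ (u + w') := by
      have h := hbest (w₀ - w') (Submodule.sub_mem _ hw₀ hw')
      have he : v - (w₀ - w') = u + w' := by rw [hu]; abel
      rwa [he] at h
    have h2 : ℓ w' ≤ ℓ (u + w') := by
      have : ℓ w' ≤ max (ℓ (u + w')) (ℓ (-u)) := by
        have := hadd (u + w') (-u)
        simpa [add_comm, add_assoc] using this
      rw [hneg] at this
      calc ℓ w' ≤ max (ℓ (u + w')) (ℓ u) := this
        _ ≤ ℓ (u + w') := max_le le_rfl h1
    exact le_antisymm (hadd u w') (max_le h1 h2)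
  constructor
  · rintro (h | h)
    · exact h0S h
    · exact hune ((Set.mem_singleton_iff.mp h).symm)
  · intro T hT c
    by_cases hmem : u ∈ T
    · by_cases hc : c u = 0
      · -- term at u vanishes
        have hsub : (↑(T.erase u) : Set V) ⊆ S := by
          intro x hx
          simp only [Finset.coe_erase, Set.mem_diff, Set.mem_singleton_iff] at hx
          rcases hT hx.1 with h | h
          · exact h
          · exact absurd h hx.2
        have hsum : (∑ x ∈ T, c x • x) = ∑ x ∈ T.erase u, c x • x :=
          (Finset.sum_erase T (by simp [hc])).symm
        have hfil : T.filter (fun x => c x ≠ 0) = (T.erase u).filter (fun x => c x ≠ 0) := by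
          rw [Finset.filter_erase, Finset.erase_eq_of_notMem]
          simp [hc]
        rw [hsum, hfil]
        exact hSsum _ hsub c
      · have hsub : (↑(T.erase u) : Set V) ⊆ S := by
          intro x hx
          simp only [Finset.coe_erase, Set.mem_diff, Set.mem_singleton_iff] at hx
          rcases hT hx.1 with h | h
          · exact h
          · exact absurd h hx.2
        have hwspan : (∑ x ∈ T.erase u, c x • x) ∈ Submodule.span κ S :=
          Submodule.sum_mem _ fun x hx =>
            Submodule.smul_mem _ _ (Submodule.subset_span (hsub hx))
        set w : V := ∑ x ∈ T.erase u, c x • x with hwdef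
        have hsum : (∑ x ∈ T, c x • x) = c u • u + w :=
          (Finset.add_sum_erase T _ hmem).symm
        have hrw : c u • u + w = c u • (u + (c u)⁻¹ • w) := by
          rw [smul_add, smul_inv_smul₀ hc]
        have hLHS : ℓ (∑ x ∈ T, c x • x) = max (ℓ u) (ℓ w) := by
          rw [hsum, hrw, hsmul _ _ hc,
            key _ (Submodule.smul_mem _ _ hwspan), hsmul _ _ (inv_ne_zero hc)]
        have hfil : T.filter (fun x => c x ≠ 0)
            = insert u ((T.erase u).filter (fun x => c x ≠ 0)) := by
          rw [Finset.filter_erase, Finset.insert_erase (Finset.mem_filter.mpr ⟨hmem, hc⟩)]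
        rw [hLHS, hfil, Finset.sup_insert, ← hSsum _ hsub c, ← hwdef]
    · -- u ∉ T : T ⊆ S
      have hsub : (↑T : Set V) ⊆ S := by
        intro x hx
        rcases hT hx with h | h
        · exact h
        · exact absurd (Set.mem_singleton_iff.mp h ▸ hx) (by simpa using hmem)
      exact hSsum _ hsub c
end

section
/- Suppose that the filtered vector space (V, ℓ) over a field κ satisfies the best approximation property. Then V has an ℓ-orthogonal subset which is a basis for V. Moreover, if S is an ℓ-orthogonal basis for a subspace W of V, then there is an ℓ-orthogonal basis for V that contains S. -/
open scoped Classical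

universe u v

/-- `ℓ` is a filtration function making `(V, ℓ)` a filtered vector space over `κ`. -/
def IsFiltrationFun (κ : Type u) [Field κ] {V : Type v} [AddCommGroup V] [Module κ V]
    (ℓ : V → WithBot ℝ) : Prop :=
  (∀ v : V, ℓ v = ⊥ ↔ v = 0) ∧
    (∀ (c : κ) (v : V), c ≠ 0 → ℓ (c • v) = ℓ v) ∧
      ∀ v w : V, ℓ (v + w) ≤ max (ℓ v) (ℓ w)

section Aux

variable {κ : Type u} [Field κ] {V : Type v} [AddCommGroup V] [Module κ V] {ℓ : V → WithBot ℝ}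

/-- An orthogonal set is linearly independent. -/
theorem IsOrthogonal.linearIndependent (hℓ : IsFiltrationFun κ ℓ) {S : Set V}
    (hS : IsOrthogonal κ ℓ S) : LinearIndependent κ (fun x : S => (x : V)) := by
  rw [show (fun x : S => (x : V)) = (fun x => x : S → V) from rfl, linearIndependent_subtype_iff, linearIndepOn_iff]
  intro l hl htot
  have h := hS.2 l.support (by exact_mod_cast hl) l
  rw [Finsupp.linearCombination_apply, Finsupp.sum] at htot
  simp only [id] at htot
  rw [htot] at h
  have hfil : (l.support.filter fun v => l v ≠ 0) = l.support := by
    apply Finset.filter_true_of_mem; intro v hv; exact Finsupp.mem_support_iff.1 hv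
  rw [hfil, (hℓ.1 0).2 rfl] at h
  ext v
  by_contra hv
  have hvs : v ∈ l.support := Finsupp.mem_support_iff.2 (by simpa using hv)
  have : ℓ v ≤ ⊥ := h ▸ Finset.le_sup hvs
  have hv0 : v = 0 := (hℓ.1 v).1 (le_bot_iff.1 this)
  exact hS.1 (hv0 ▸ (hl hvs : v ∈ S))

theorem lmax_aux (hℓ : IsFiltrationFun κ ℓ) {M : Set V} {u : V}
    (happ : ∀ x ∈ Submodule.span κ M, ℓ u ≤ ℓ (u + x))
    {c : κ} (hc : c ≠ 0) {x : V} (hx : x ∈ Submodule.span κ M) :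
    ℓ (c • u + x) = max (ℓ u) (ℓ x) := by
  set y := c⁻¹ • x with hy
  have hyx : ℓ y = ℓ x := hℓ.2.1 c⁻¹ x (inv_ne_zero hc)
  have hrw : c • u + x = c • (u + y) := by
    rw [smul_add, hy, smul_inv_smul₀ hc]
  have hym : y ∈ Submodule.span κ M := Submodule.smul_mem _ _ hx
  rw [hrw, hℓ.2.1 c _ hc, ← hyx]
  rcases le_or_gt (ℓ y) (ℓ u) with h | h
  · rw [max_eq_left h]
    exact le_antisymm (le_trans (hℓ.2.2 u y) (max_le le_rfl h)) (happ y hym)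
  · rw [max_eq_right h.le]
    refine le_antisymm (le_trans (hℓ.2.2 u y) (max_le h.le le_rfl)) ?_
    have hneg : ℓ (-u) = ℓ u := by
      rw [show -u = (-1 : κ) • u by simp]; exact hℓ.2.1 _ _ (by simp)
    have : ℓ y ≤ max (ℓ (u + y)) (ℓ u) := by
      calc ℓ y = ℓ ((u + y) + -u) := by rw [show (u + y) + -u = y by abel]
        _ ≤ max (ℓ (u + y)) (ℓ (-u)) := hℓ.2.2 _ _
        _ = max (ℓ (u + y)) (ℓ u) := by rw [hneg]
    rcases max_cases (ℓ (u + y)) (ℓ u) with ⟨he, _⟩ | ⟨he, hlt⟩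
    · exact le_trans this he.le
    · exact absurd (lt_of_le_of_lt (this.trans he.le) h) (lt_irrefl _)

/-- Inserting a best-approximation error vector keeps orthogonality. -/
theorem orth_insert (hℓ : IsFiltrationFun κ ℓ) {M : Set V} {u : V}
    (hM : IsOrthogonal κ ℓ M) (huM : u ∉ Submodule.span κ M)
    (happ : ∀ x ∈ Submodule.span κ M, ℓ u ≤ ℓ (u + x)) :
    IsOrthogonal κ ℓ (insert u M) := by
  have hu0 : u ≠ 0 := fun h => huM (h ▸ Submodule.zero_mem _)
  constructor
  · rintro (h | h)
    · exact hu0 h.symm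
    · exact hM.1 h
  intro T hT c
  by_cases huT : u ∈ T ∧ c u ≠ 0
  · obtain ⟨huT, hcu⟩ := huT
    have herase : ((T.erase u : Finset V) : Set V) ⊆ M := by
      intro v hv
      rcases hT (Finset.erase_subset _ _ (by exact_mod_cast hv)) with h | h
      · exact absurd h (Finset.ne_of_mem_erase (by exact_mod_cast hv))
      · exact h
    have hxmem : (∑ v ∈ T.erase u, c v • v) ∈ Submodule.span κ M := by
      refine Submodule.sum_mem _ fun v hv => Submodule.smul_mem _ _ ?_
      exact Submodule.subset_span (herase (by exact_mod_cast hv))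
    rw [← Finset.add_sum_erase T _ huT, lmax_aux hℓ happ hcu hxmem,
      hM.2 (T.erase u) herase c]
    have hfil : T.filter (fun v => c v ≠ 0) = insert u ((T.erase u).filter fun v => c v ≠ 0) := by
      ext v
      simp only [Finset.mem_filter, Finset.mem_insert, Finset.mem_erase]
      constructor
      · rintro ⟨hv, hcv⟩
        by_cases hvu : v = u
        · exact Or.inl hvu
        · exact Or.inr ⟨⟨hvu, hv⟩, hcv⟩
      · rintro (rfl | ⟨⟨_, hv⟩, hcv⟩)
        · exact ⟨huT, hcu⟩
        · exact ⟨hv, hcv⟩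
    rw [hfil, Finset.sup_insert]
  · rcases not_and_or.1 huT with huT | hcu
    · have hTM : (T : Set V) ⊆ M := fun v hv => by
        rcases hT hv with h | h
        · exact absurd (h ▸ hv) (by exact_mod_cast huT)
        · exact h
      exact hM.2 T hTM c
    · push_neg at hcu
      by_cases huT2 : u ∈ T
      · have herase : ((T.erase u : Finset V) : Set V) ⊆ M := by
          intro v hv
          rcases hT (Finset.erase_subset _ _ (by exact_mod_cast hv)) with h | h
          · exact absurd h (Finset.ne_of_mem_erase (by exact_mod_cast hv))
          · exact h
        have hsum : ∑ v ∈ T, c v • v = ∑ v ∈ T.erase u, c v • v := by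
          rw [← Finset.add_sum_erase T _ huT2, hcu, zero_smul, zero_add]
        have hfil : T.filter (fun v => c v ≠ 0) = (T.erase u).filter fun v => c v ≠ 0 := by
          ext v
          simp only [Finset.mem_filter, Finset.mem_erase]
          constructor
          · rintro ⟨hv, hcv⟩
            refine ⟨⟨?_, hv⟩, hcv⟩
            rintro rfl; exact hcv hcu
          · rintro ⟨⟨_, hv⟩, hcv⟩; exact ⟨hv, hcv⟩
        rw [hsum, hfil]
        exact hM.2 (T.erase u) herase c
      · have hTM : (T : Set V) ⊆ M := fun v hv => by
          rcases hT hv with h | h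
          · exact absurd (h ▸ hv) (by exact_mod_cast huT2)
          · exact h
        exact hM.2 T hTM c

/-- Every orthogonal set extends to an orthogonal spanning set. -/
theorem extend_aux (hℓ : IsFiltrationFun κ ℓ) (hba : HasBestApprox κ ℓ) {S : Set V}
    (hS : IsOrthogonal κ ℓ S) :
    ∃ S' : Set V, S ⊆ S' ∧ IsOrthogonal κ ℓ S' ∧ Submodule.span κ S' = ⊤ := by
  have hzorn : ∀ c ⊆ {M : Set V | IsOrthogonal κ ℓ M}, IsChain (· ⊆ ·) c → c.Nonempty →
      ∃ ub ∈ {M : Set V | IsOrthogonal κ ℓ M}, ∀ s ∈ c, s ⊆ ub := by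
    intro c hc hchain hne
    refine ⟨⋃₀ c, ⟨?_, ?_⟩, fun s hs => Set.subset_sUnion_of_mem hs⟩
    · rintro ⟨M, hM, h0⟩
      exact (hc hM).1 h0
    · intro T hT cf
      have hdir : DirectedOn (fun i j : Set V => i ⊆ j) c :=
        fun x hx y hy => by
          rcases hchain.total hx hy with h | h
          · exact ⟨y, hy, h, Set.Subset.rfl⟩
          · exact ⟨x, hx, Set.Subset.rfl, h⟩
      have hT' : (T : Set V) ⊆ ⋃ i ∈ c, i := by rwa [← Set.sUnion_eq_biUnion]
      obtain ⟨M, hM, hTM⟩ :=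
        DirectedOn.exists_mem_subset_of_finset_subset_biUnion hne hdir hT'
      exact (hc hM).2 T hTM cf
  obtain ⟨m, hSm, hm⟩ := zorn_subset_nonempty {M : Set V | IsOrthogonal κ ℓ M} hzorn S hS
  · refine ⟨m, hSm, hm.1, ?_⟩
    by_contra hne
    have hv : ∃ v : V, v ∉ Submodule.span κ m := by
      by_contra h
      push_neg at h
      exact hne (eq_top_iff.2 fun v _ => h v)
    obtain ⟨v, hv⟩ := hv
    obtain ⟨w₀, hw₀, hmin⟩ := hba (Submodule.span κ m) v hv
    set u := v - w₀ with hu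
    have huM : u ∉ Submodule.span κ m := fun h =>
      hv (by simpa [hu] using Submodule.add_mem _ h hw₀)
    have happ : ∀ x ∈ Submodule.span κ m, ℓ u ≤ ℓ (u + x) := by
      intro x hx
      have := hmin (w₀ - x) (Submodule.sub_mem _ hw₀ hx)
      rwa [show v - (w₀ - x) = u + x by rw [hu]; abel] at this
    have hins : IsOrthogonal κ ℓ (insert u m) := orth_insert hℓ hm.1 huM happ
    have hum : u ∉ m := fun h => huM (Submodule.subset_span h)
    exact hum (hm.2 hins (Set.subset_insert u m) (Set.mem_insert u m))

end Aux

/-- If `(V, ℓ)` satisfies the best approximation property then `V` has an `ℓ`-orthogonal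
basis; moreover every `ℓ`-orthogonal basis `S` of a subspace `W` extends to an
`ℓ`-orthogonal basis of `V` containing `S`. -/
theorem exists_orthogonal_basis_and_extension (κ : Type u) [Field κ] {V : Type v}
    [AddCommGroup V] [Module κ V] (ℓ : V → WithBot ℝ) (hℓ : IsFiltrationFun κ ℓ)
    (hba : HasBestApprox κ ℓ) :
    (∃ S : Set V, IsOrthogonal κ ℓ S ∧ LinearIndependent κ (fun x : S => (x : V)) ∧
        Submodule.span κ S = ⊤) ∧
      ∀ (W : Submodule κ V) (S : Set V), IsOrthogonal κ ℓ S →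
        LinearIndependent κ (fun x : S => (x : V)) → Submodule.span κ S = W →
        ∃ S' : Set V, S ⊆ S' ∧ IsOrthogonal κ ℓ S' ∧
          LinearIndependent κ (fun x : S' => (x : V)) ∧ Submodule.span κ S' = ⊤ := by
  constructor
  · have hempty : IsOrthogonal κ ℓ (∅ : Set V) := by
      refine ⟨Set.notMem_empty 0, ?_⟩
      intro T hT c
      have : T = ∅ := Finset.coe_eq_empty.1 (Set.subset_empty_iff.1 (by simpa using hT))
      subst this
      simp [(hℓ.1 0).2 rfl]
    obtain ⟨S', _, hS', hspan⟩ := extend_aux hℓ hba hempty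
    exact ⟨S', hS', hS'.linearIndependent hℓ, hspan⟩
  · intro W S hS _ _
    obtain ⟨S', hSS', hS', hspan⟩ := extend_aux hℓ hba hS
    exact ⟨S', hSS', hS', hS'.linearIndependent hℓ, hspan⟩
end

section
/- If a filtered vector space (V, ℓ) over a field κ satisfies the best approximation property, then every subspace W of V has an ℓ-orthogonal complement. -/
universe u v

/-- If `(V, ℓ)` satisfies the best approximation property then every subspace `W` of `V`
has an `ℓ`-orthogonal complement: a subspace `X` with `V = W ⊕ X` (internally) such that
`ℓ (w + x) = max (ℓ w) (ℓ x)` for all `w ∈ W`, `x ∈ X`. -/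
theorem exists_orthogonal_complement (κ : Type u) [Field κ] {V : Type v}
    [AddCommGroup V] [Module κ V] (ℓ : V → WithBot ℝ) (hℓ : IsFiltrationFn κ ℓ)
    (hba : HasBestApprox κ ℓ) (W : Submodule κ V) :
    ∃ X : Submodule κ V, IsCompl W X ∧
      ∀ w ∈ W, ∀ x ∈ X, ℓ (w + x) = max (ℓ w) (ℓ x) := by
  obtain ⟨hbot, hscale, hadd⟩ := hℓ
  have hzero : ℓ (0 : V) = ⊥ := (hbot 0).2 rfl
  have hneg : ∀ v : V, ℓ (-v) = ℓ v := fun v => by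
    have := hscale (-1) v (by norm_num); simpa using this
  set S : Set (Submodule κ V) :=
    {X | Disjoint W X ∧ ∀ w ∈ W, ∀ x ∈ X, ℓ (w + x) = max (ℓ w) (ℓ x)} with hS
  have hbotS : (⊥ : Submodule κ V) ∈ S := by
    refine ⟨disjoint_bot_right, fun w _ x hx => ?_⟩
    simp only [Submodule.mem_bot] at hx
    simp [hx, hzero]
  have hchain : ∀ c ⊆ S, IsChain (· ≤ ·) c → ∀ y ∈ c,
      ∃ ub ∈ S, ∀ z ∈ c, z ≤ ub := by
    intro c hcS hc y hy
    refine ⟨sSup c, ⟨?_, ?_⟩, fun z hz => le_sSup hz⟩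
    · rw [disjoint_iff_inf_le]
      intro v hv
      obtain ⟨hvW, hvX⟩ := Submodule.mem_inf.1 hv
      obtain ⟨Y, hYc, hvY⟩ :=
        (Submodule.mem_sSup_of_directed ⟨y, hy⟩ hc.directedOn).1 hvX
      simp [Submodule.disjoint_def.1 (hcS hYc).1 v hvW hvY]
    · intro w hw x hx
      obtain ⟨Y, hYc, hxY⟩ :=
        (Submodule.mem_sSup_of_directed ⟨y, hy⟩ hc.directedOn).1 hx
      exact (hcS hYc).2 w hw x hxY
  obtain ⟨X, -, hXS, hXmax⟩ := zorn_le_nonempty₀ S hchain ⊥ hbotS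
  refine ⟨X, ⟨hXS.1, ?_⟩, hXS.2⟩
  by_contra hcod
  have htop : W ⊔ X ≠ ⊤ := fun h => hcod (codisjoint_iff.2 h)
  obtain ⟨v, hv⟩ : ∃ v : V, v ∉ W ⊔ X := by
    by_contra h
    push_neg at h
    exact htop (Submodule.eq_top_iff'.2 h)
  obtain ⟨u₀, hu₀, hmin⟩ := hba (W ⊔ X) v hv
  set x₀ := v - u₀ with hx₀def
  have hx₀ : x₀ ∉ W ⊔ X := by
    intro h
    exact hv (by simpa [hx₀def] using add_mem h hu₀)
  have hmin' : ∀ u ∈ W ⊔ X, ℓ x₀ ≤ ℓ (x₀ + u) := by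
    intro u hu
    have h1 : u₀ - u ∈ W ⊔ X := sub_mem hu₀ hu
    have := hmin (u₀ - u) h1
    have heq : v - (u₀ - u) = x₀ + u := by rw [hx₀def]; abel
    rwa [heq] at this
  -- key lemma
  have key : ∀ u ∈ W ⊔ X, ∀ c : κ, ℓ (u + c • x₀) = max (ℓ u) (ℓ (c • x₀)) := by
    intro u hu c
    rcases eq_or_ne c 0 with rfl | hc
    · simp [hzero]
    have hcx : ℓ (c • x₀) = ℓ x₀ := hscale c x₀ hc
    have h1 : ℓ x₀ ≤ ℓ (u + c • x₀) := by
      have heq : u + c • x₀ = c • (x₀ + c⁻¹ • u) := by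
        rw [smul_add, smul_smul, mul_inv_cancel₀ hc, one_smul, add_comm]
      rw [heq, hscale c _ hc]
      exact hmin' (c⁻¹ • u) (Submodule.smul_mem _ _ hu)
    have h2 : ℓ (u + c • x₀) ≤ max (ℓ u) (ℓ x₀) := by
      have := hadd u (c • x₀); rwa [hcx] at this
    have h3 : ℓ u ≤ max (ℓ (u + c • x₀)) (ℓ x₀) := by
      have heq : u = (u + c • x₀) + -(c • x₀) := by abel
      calc ℓ u = ℓ ((u + c • x₀) + -(c • x₀)) := by rw [← heq]
        _ ≤ max (ℓ (u + c • x₀)) (ℓ (-(c • x₀))) := hadd _ _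
        _ = max (ℓ (u + c • x₀)) (ℓ x₀) := by rw [hneg, hcx]
    have h3' : ℓ u ≤ ℓ (u + c • x₀) := h3.trans (max_le le_rfl h1)
    rw [hcx]
    exact le_antisymm h2 (max_le h3' h1)
  -- build larger subspace
  set X' := X ⊔ Submodule.span κ {x₀} with hX'def
  have hmemX' : ∀ y ∈ X', ∃ x ∈ X, ∃ c : κ, y = x + c • x₀ := by
    intro y hy
    obtain ⟨x, hx, s, hs, rfl⟩ := Submodule.mem_sup.1 hy
    obtain ⟨c, rfl⟩ := Submodule.mem_span_singleton.1 hs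
    exact ⟨x, hx, c, rfl⟩
  have hXle : ∀ x ∈ X, x ∈ W ⊔ X := fun x hx => Submodule.mem_sup_right hx
  have hX'S : X' ∈ S := by
    constructor
    · rw [disjoint_iff_inf_le]
      intro z hz
      obtain ⟨hzW, hzX'⟩ := Submodule.mem_inf.1 hz
      obtain ⟨x, hx, c, hzeq⟩ := hmemX' z hzX'
      rcases eq_or_ne c 0 with rfl | hc
      · simp only [zero_smul, add_zero] at hzeq
        subst hzeq
        simp [Submodule.disjoint_def.1 hXS.1 z hzW hx]
      · exfalso
        apply hx₀
        have : c • x₀ = z - x := by rw [hzeq]; abel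
        have hmem : c • x₀ ∈ W ⊔ X :=
          this ▸ sub_mem (Submodule.mem_sup_left hzW) (hXle x hx)
        have := Submodule.smul_mem (W ⊔ X) c⁻¹ hmem
        rwa [smul_smul, inv_mul_cancel₀ hc, one_smul] at this
    · intro w hw y hy
      obtain ⟨x, hx, c, rfl⟩ := hmemX' y hy
      have e1 : ℓ (w + (x + c • x₀)) = max (ℓ (w + x)) (ℓ (c • x₀)) := by
        have := key (w + x) (add_mem (Submodule.mem_sup_left hw) (hXle x hx)) c
        rwa [add_assoc] at this
      have e2 : ℓ (w + x) = max (ℓ w) (ℓ x) := hXS.2 w hw x hx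
      have e3 : ℓ (x + c • x₀) = max (ℓ x) (ℓ (c • x₀)) := key x (hXle x hx) c
      rw [e1, e2, e3, max_assoc]
  have hXX' : X ≤ X' := le_sup_left
  have hx₀X' : x₀ ∈ X' := Submodule.mem_sup_right (Submodule.mem_span_singleton_self x₀)
  have hx₀X : x₀ ∉ X := fun h => hx₀ (hXle x₀ h)
  have : X' ≤ X := hXmax hX'S hXX'
  exact hx₀X (this hx₀X')
end

section
/- Let (V, ℓ) be a finite-dimensional filtered vector space over a field κ, and for each t ∈ ℝ let V^{≤t} = {v ∈ V : ℓ(v) ≤ t} and V^{<t} = {v ∈ V : ℓ(v) < t} (these are subspaces of V). A basis {v₁, …, v_d} of V is ℓ-orthogonal if and only if for every t ∈ ℝ the number of indices i ∈ {1, …, d} with ℓ(vᵢ) = t is equal to dim(V^{≤t}/V^{<t}). -/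
open scoped Classical

universe u v

/-- `ℓ` is a filtration function making `(V, ℓ)` a filtered vector space over `κ`. -/
def IsVectorFiltration (κ : Type u) [Field κ] {V : Type v} [AddCommGroup V] [Module κ V]
    (ℓ : V → WithBot ℝ) : Prop :=
  (∀ v : V, ℓ v = ⊥ ↔ v = 0) ∧
    (∀ (c : κ) (v : V), c ≠ 0 → ℓ (c • v) = ℓ v) ∧
      ∀ v w : V, ℓ (v + w) ≤ max (ℓ v) (ℓ w)

/-- The subspace `V^{≤t} = {v : ℓ v ≤ t}`. -/
def sublevelLE (κ : Type u) [Field κ] {V : Type v} [AddCommGroup V] [Module κ V]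
    (ℓ : V → WithBot ℝ) (hℓ : IsVectorFiltration κ ℓ) (t : ℝ) : Submodule κ V where
  carrier := {v : V | ℓ v ≤ (t : WithBot ℝ)}
  zero_mem' := by
    have h0 : ℓ (0 : V) = ⊥ := (hℓ.1 0).mpr rfl
    simp only [Set.mem_setOf_eq, h0]
    exact bot_le
  add_mem' := by
    intro a b ha hb
    exact le_trans (hℓ.2.2 a b) (max_le ha hb)
  smul_mem' := by
    intro c x hx
    rcases eq_or_ne c 0 with hc | hc
    · have h0 : ℓ (0 : V) = ⊥ := (hℓ.1 0).mpr rfl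
      simp only [hc, zero_smul, Set.mem_setOf_eq, h0]
      exact bot_le
    · simpa only [Set.mem_setOf_eq, hℓ.2.1 c x hc] using hx

/-- The subspace `V^{<t} = {v : ℓ v < t}`. -/
def sublevelLT (κ : Type u) [Field κ] {V : Type v} [AddCommGroup V] [Module κ V]
    (ℓ : V → WithBot ℝ) (hℓ : IsVectorFiltration κ ℓ) (t : ℝ) : Submodule κ V where
  carrier := {v : V | ℓ v < (t : WithBot ℝ)}
  zero_mem' := by
    have h0 : ℓ (0 : V) = ⊥ := (hℓ.1 0).mpr rfl
    simp only [Set.mem_setOf_eq, h0]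
    exact WithBot.bot_lt_coe t
  add_mem' := by
    intro a b ha hb
    exact lt_of_le_of_lt (hℓ.2.2 a b) (max_lt ha hb)
  smul_mem' := by
    intro c x hx
    rcases eq_or_ne c 0 with hc | hc
    · have h0 : ℓ (0 : V) = ⊥ := (hℓ.1 0).mpr rfl
      simp only [hc, zero_smul, Set.mem_setOf_eq, h0]
      exact WithBot.bot_lt_coe t
    · simpa only [Set.mem_setOf_eq, hℓ.2.1 c x hc] using hx

section OrthAux

open Module Submodule Finset

variable {κ : Type u} [Field κ] {V : Type v} [AddCommGroup V] [Module κ V]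
  {ℓ : V → WithBot ℝ} (hℓ : IsVectorFiltration κ ℓ)

include hℓ

lemma l_zero : ℓ (0 : V) = ⊥ := (hℓ.1 0).mpr rfl

lemma l_sum_le {ι : Type*} (s : Finset ι) (f : ι → V) :
    ℓ (∑ i ∈ s, f i) ≤ s.sup fun i => ℓ (f i) := by
  classical
  induction s using Finset.cons_induction with
  | empty => simp [l_zero hℓ]
  | cons a s ha ih =>
    rw [Finset.sum_cons, Finset.sup_cons]
    exact le_trans (hℓ.2.2 _ _) (sup_le_sup le_rfl ih)

lemma mem_sublevelLE {v : V} {t : ℝ} :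
    v ∈ sublevelLE κ ℓ hℓ t ↔ ℓ v ≤ (t : WithBot ℝ) := Iff.rfl

lemma mem_sublevelLT {v : V} {t : ℝ} :
    v ∈ sublevelLT κ ℓ hℓ t ↔ ℓ v < (t : WithBot ℝ) := Iff.rfl

variable {d : ℕ} (b : Basis (Fin d) κ V)

/-- The key intermediate condition. -/
def StarCond : Prop :=
  ∀ t : ℝ, sublevelLE κ ℓ hℓ t ≤ Submodule.span κ (b '' {i | ℓ (b i) ≤ (t : WithBot ℝ)})

lemma span_le_LE (t : ℝ) :
    Submodule.span κ (b '' {i | ℓ (b i) ≤ (t : WithBot ℝ)}) ≤ sublevelLE κ ℓ hℓ t := by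
  rw [Submodule.span_le]
  rintro _ ⟨i, hi, rfl⟩
  exact hi

lemma span_le_LT (t : ℝ) :
    Submodule.span κ (b '' {i | ℓ (b i) < (t : WithBot ℝ)}) ≤ sublevelLT κ ℓ hℓ t := by
  rw [Submodule.span_le]
  rintro _ ⟨i, hi, rfl⟩
  exact hi

lemma LT_le_span (hS : StarCond hℓ b) (t : ℝ) :
    sublevelLT κ ℓ hℓ t ≤ Submodule.span κ (b '' {i | ℓ (b i) < (t : WithBot ℝ)}) := by
  intro v hv
  rcases eq_or_ne v 0 with rfl | hv0
  · exact Submodule.zero_mem _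
  · have hne : ℓ v ≠ ⊥ := fun h => hv0 ((hℓ.1 v).mp h)
    obtain ⟨s, hs⟩ := WithBot.ne_bot_iff_exists.mp hne
    have hst : (s : WithBot ℝ) < (t : WithBot ℝ) := hs ▸ hv
    have hvs : v ∈ sublevelLE κ ℓ hℓ s := le_of_eq hs.symm
    refine Submodule.span_mono (Set.image_mono ?_) (hS s hvs)
    intro i hi
    exact lt_of_le_of_lt hi hst

end OrthAux

section OrthAux2

open Module Submodule Finset

variable {κ : Type u} [Field κ] {V : Type v} [AddCommGroup V] [Module κ V]
  {ℓ : V → WithBot ℝ} (hℓ : IsVectorFiltration κ ℓ) {d : ℕ} (b : Basis (Fin d) κ V)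

include hℓ

lemma star_of_orth (hO : IsOrthogonal κ ℓ (Set.range fun i => b i)) : StarCond hℓ b := by
  classical
  intro t v hv
  set c : V → κ := fun w => if h : ∃ i, b i = w then b.repr v h.choose else 0 with hc
  have hcb : ∀ i, c (b i) = b.repr v i := by
    intro i
    have h : ∃ j, b j = b i := ⟨i, rfl⟩
    simp only [hc, dif_pos h]
    rw [b.injective h.choose_spec]
  have hsum : ∑ w ∈ Finset.univ.image b, c w • w = v := by
    rw [Finset.sum_image (fun i _ j _ h => b.injective h)]
    simp only [hcb]
    exact b.sum_repr v
  have hO2 := hO.2 (Finset.univ.image b)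
    (by rw [Finset.coe_image]; exact (Set.image_subset_range _ _).trans (by simp)) c
  rw [hsum] at hO2
  have hkey : ∀ i : Fin d, b.repr v i ≠ 0 → ℓ (b i) ≤ (t : WithBot ℝ) := by
    intro i hi
    have hmem : b i ∈ (Finset.univ.image b).filter fun w => c w ≠ 0 := by
      refine Finset.mem_filter.mpr ⟨Finset.mem_image_of_mem _ (Finset.mem_univ i), ?_⟩
      rw [hcb]; exact hi
    calc ℓ (b i) ≤ _ := Finset.le_sup hmem
    _ = ℓ v := hO2.symm
    _ ≤ (t : WithBot ℝ) := hv
  rw [Basis.mem_span_image]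
  intro i hi
  exact hkey i (Finsupp.mem_support_iff.mp hi)

end OrthAux2

section OrthAux3

open Module Submodule Finset

variable {κ : Type u} [Field κ] {V : Type v} [AddCommGroup V] [Module κ V]
  {ℓ : V → WithBot ℝ} (hℓ : IsVectorFiltration κ ℓ) {d : ℕ} (b : Basis (Fin d) κ V)

include hℓ

lemma orth_of_star (hS : StarCond hℓ b) : IsOrthogonal κ ℓ (Set.range fun i => b i) := by
  classical
  constructor
  · rintro ⟨i, hi⟩
    exact b.ne_zero i hi
  intro T hT c
  have hinj : Set.InjOn b (b ⁻¹' ↑T) := b.injective.injOn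
  set S := T.preimage b hinj with hSdef
  have hTS : T = S.image b := by
    ext w
    simp only [hSdef, Finset.mem_image, Finset.mem_preimage]
    constructor
    · intro hw
      obtain ⟨i, rfl⟩ := hT hw
      exact ⟨i, hw, rfl⟩
    · rintro ⟨i, hi, rfl⟩
      exact hi
  rw [hTS, Finset.sum_image (fun i _ j _ h => b.injective h), Finset.filter_image,
    Finset.sup_image]
  set F := S.filter (fun i => c (b i) ≠ 0) with hF
  have hsum : ∑ i ∈ S, c (b i) • b i = ∑ i ∈ F, c (b i) • b i := by
    rw [hF]
    refine (Finset.sum_filter_of_ne ?_).symm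
    intro i _ h hc0
    exact h (by rw [hc0, zero_smul])
  rw [hsum]
  rcases F.eq_empty_or_nonempty with hFe | hFne
  · simp [hFe, l_zero hℓ, Function.comp]
  obtain ⟨i₀, hi₀F, hsup⟩ := Finset.exists_mem_eq_sup F hFne (fun i => ℓ (b i))
  have hsup' : F.sup ((fun w => ℓ w) ∘ b) = ℓ (b i₀) := hsup.symm ▸ rfl
  have hbne : ℓ (b i₀) ≠ ⊥ := fun h => b.ne_zero i₀ ((hℓ.1 _).mp h)
  obtain ⟨t, ht⟩ := WithBot.ne_bot_iff_exists.mp hbne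
  have hle : ℓ (∑ i ∈ F, c (b i) • b i) ≤ F.sup ((fun w => ℓ w) ∘ b) := by
    refine le_trans (l_sum_le hℓ F _) (le_of_eq ?_)
    refine Finset.sup_congr rfl fun i hi => ?_
    exact hℓ.2.1 _ _ (Finset.mem_filter.mp hi).2
  rcases lt_or_eq_of_le hle with hlt | heq
  · exfalso
    have hltt : ℓ (∑ i ∈ F, c (b i) • b i) < (t : WithBot ℝ) := by
      rw [ht]; rwa [hsup'] at hlt
    have hmem : (∑ i ∈ F, c (b i) • b i) ∈
        Submodule.span κ (b '' {i | ℓ (b i) < (t : WithBot ℝ)}) :=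
      LT_le_span hℓ b hS t hltt
    rw [Basis.mem_span_image] at hmem
    have hrepr : b.repr (∑ i ∈ F, c (b i) • b i) i₀ = c (b i₀) := by
      rw [map_sum, Finsupp.finset_sum_apply]
      rw [Finset.sum_eq_single i₀]
      · simp
      · intro j _ hjne
        simp [Finsupp.single_apply, hjne]
      · intro h
        exact absurd hi₀F h
    have hi₀mem : i₀ ∈ (b.repr (∑ i ∈ F, c (b i) • b i)).support := by
      rw [Finsupp.mem_support_iff, hrepr]
      exact (Finset.mem_filter.mp hi₀F).2
    have := hmem hi₀mem
    rw [Set.mem_setOf_eq] at this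
    rw [← ht] at this
    exact lt_irrefl _ this
  · exact heq

end OrthAux3

section OrthAux4

open Module Submodule Finset

variable {κ : Type u} [Field κ] {V : Type v} [AddCommGroup V] [Module κ V]
  [FiniteDimensional κ V]
  {ℓ : V → WithBot ℝ} (hℓ : IsVectorFiltration κ ℓ) {d : ℕ} (b : Basis (Fin d) κ V)

lemma finrank_span_image (I : Set (Fin d)) :
    finrank κ (Submodule.span κ (b '' I)) = Fintype.card I := by
  classical
  rw [Set.image_eq_range]
  exact finrank_span_eq_card (b.linearIndependent.comp _ Subtype.val_injective)

lemma card_subtype_filter (p : Fin d → Prop) :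
    Fintype.card {i : Fin d // p i} = (Finset.univ.filter p).card := by
  classical
  simp [Fintype.card_subtype]

include hℓ

lemma LE_LT_le (t : ℝ) : sublevelLT κ ℓ hℓ t ≤ sublevelLE κ ℓ hℓ t :=
  fun _ hv => (mem_sublevelLE hℓ).mpr (le_of_lt ((mem_sublevelLT hℓ).mp hv))

lemma quot_formula (t : ℝ) :
    finrank κ
        (↥(sublevelLE κ ℓ hℓ t) ⧸
          Submodule.comap (sublevelLE κ ℓ hℓ t).subtype (sublevelLT κ ℓ hℓ t)) +
      finrank κ (sublevelLT κ ℓ hℓ t) = finrank κ (sublevelLE κ ℓ hℓ t) := by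
  have h := Submodule.finrank_quotient_add_finrank
    (Submodule.comap (sublevelLE κ ℓ hℓ t).subtype (sublevelLT κ ℓ hℓ t))
  rwa [LinearEquiv.finrank_eq (Submodule.comapSubtypeEquivOfLe (LE_LT_le hℓ t))] at h

lemma card_split (t : ℝ) :
    (Finset.univ.filter fun i : Fin d => ℓ (b i) ≤ (t : WithBot ℝ)).card =
      (Finset.univ.filter fun i : Fin d => ℓ (b i) = (t : WithBot ℝ)).card +
        (Finset.univ.filter fun i : Fin d => ℓ (b i) < (t : WithBot ℝ)).card := by
  classical
  have h1 : (Finset.univ.filter fun i : Fin d => ℓ (b i) ≤ (t : WithBot ℝ)) =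
      (Finset.univ.filter fun i : Fin d =>
        ℓ (b i) = (t : WithBot ℝ) ∨ ℓ (b i) < (t : WithBot ℝ)) := by
    apply Finset.filter_congr
    intro i _
    constructor
    · intro h
      rcases lt_or_eq_of_le h with h' | h'
      · exact Or.inr h'
      · exact Or.inl h'
    · rintro (h | h)
      · exact le_of_eq h
      · exact le_of_lt h
  rw [h1, Finset.filter_or, Finset.card_union_of_disjoint]
  rw [Finset.disjoint_left]
  intro i hi hi'
  have h1 := (Finset.mem_filter.mp hi).2
  have h2 := (Finset.mem_filter.mp hi').2
  rw [h1] at h2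
  exact lt_irrefl _ h2

end OrthAux4

section OrthAux5

open Module Submodule Finset

variable {κ : Type u} [Field κ] {V : Type v} [AddCommGroup V] [Module κ V]
  [FiniteDimensional κ V]
  {ℓ : V → WithBot ℝ} (hℓ : IsVectorFiltration κ ℓ) {d : ℕ} (b : Basis (Fin d) κ V)

include hℓ

lemma counts_of_star (hS : StarCond hℓ b) (t : ℝ) :
    (Finset.univ.filter fun i : Fin d => ℓ (b i) = (t : WithBot ℝ)).card =
      finrank κ
        (↥(sublevelLE κ ℓ hℓ t) ⧸
          Submodule.comap (sublevelLE κ ℓ hℓ t).subtype (sublevelLT κ ℓ hℓ t)) := by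
  classical
  have hLE : sublevelLE κ ℓ hℓ t =
      Submodule.span κ (b '' {i | ℓ (b i) ≤ (t : WithBot ℝ)}) :=
    le_antisymm (hS t) (span_le_LE hℓ b t)
  have hLT : sublevelLT κ ℓ hℓ t =
      Submodule.span κ (b '' {i | ℓ (b i) < (t : WithBot ℝ)}) :=
    le_antisymm (LT_le_span hℓ b hS t) (span_le_LT hℓ b t)
  have h1 : finrank κ (sublevelLE κ ℓ hℓ t) =
      (Finset.univ.filter fun i : Fin d => ℓ (b i) ≤ (t : WithBot ℝ)).card := by
    rw [hLE, finrank_span_image, card_subtype_filter]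
    apply Finset.card_bij (fun i _ => i) <;> simp [Set.mem_setOf_eq]
  have h2 : finrank κ (sublevelLT κ ℓ hℓ t) =
      (Finset.univ.filter fun i : Fin d => ℓ (b i) < (t : WithBot ℝ)).card := by
    rw [hLT, finrank_span_image, card_subtype_filter]
    apply Finset.card_bij (fun i _ => i) <;> simp [Set.mem_setOf_eq]
  have hq := quot_formula hℓ t
  have hsplit := card_split hℓ b t
  omega

end OrthAux5

section OrthAux6

open Module Submodule Finset

variable {κ : Type u} [Field κ] {V : Type v} [AddCommGroup V] [Module κ V]
  [FiniteDimensional κ V]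
  {ℓ : V → WithBot ℝ} (hℓ : IsVectorFiltration κ ℓ) {d : ℕ} (b : Basis (Fin d) κ V)

/-- The right-hand condition of the theorem. -/
def CountsCond : Prop :=
  ∀ t : ℝ,
    (Finset.univ.filter fun i : Fin d => ℓ (b i) = (t : WithBot ℝ)).card =
      finrank κ
        (↥(sublevelLE κ ℓ hℓ t) ⧸
          Submodule.comap (sublevelLE κ ℓ hℓ t).subtype (sublevelLT κ ℓ hℓ t))

include hℓ

lemma value_mem (hc : CountsCond hℓ b) {v : V} (hv : v ≠ 0) : ∃ i, ℓ (b i) = ℓ v := by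
  classical
  have hne : ℓ v ≠ ⊥ := fun h => hv ((hℓ.1 v).mp h)
  obtain ⟨r, hr⟩ := WithBot.ne_bot_iff_exists.mp hne
  by_contra h
  push_neg at h
  have hm : (Finset.univ.filter fun i : Fin d => ℓ (b i) = (r : WithBot ℝ)).card = 0 := by
    rw [Finset.card_eq_zero, Finset.filter_eq_empty_iff]
    intro i _
    rw [hr]
    exact h i
  have hq := hc r
  rw [hm] at hq
  have hsub : Subsingleton
      (↥(sublevelLE κ ℓ hℓ r) ⧸
        Submodule.comap (sublevelLE κ ℓ hℓ r).subtype (sublevelLT κ ℓ hℓ r)) :=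
    Module.finrank_zero_iff.mp hq.symm
  have hvL : v ∈ sublevelLE κ ℓ hℓ r := (mem_sublevelLE hℓ).mpr (le_of_eq hr.symm)
  have hz : (Submodule.Quotient.mk (⟨v, hvL⟩ : sublevelLE κ ℓ hℓ r) :
      ↥(sublevelLE κ ℓ hℓ r) ⧸
        Submodule.comap (sublevelLE κ ℓ hℓ r).subtype (sublevelLT κ ℓ hℓ r)) = 0 :=
    Subsingleton.elim _ _
  rw [Submodule.Quotient.mk_eq_zero] at hz
  have : ℓ v < (r : WithBot ℝ) := hz
  rw [← hr] at this
  exact lt_irrefl _ this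

lemma frank_eq (hc : CountsCond hℓ b) : ∀ (n : ℕ) (t : ℝ),
    (Finset.univ.filter fun i : Fin d => ℓ (b i) < (t : WithBot ℝ)).card = n →
    finrank κ (sublevelLE κ ℓ hℓ t) =
      (Finset.univ.filter fun i : Fin d => ℓ (b i) ≤ (t : WithBot ℝ)).card := by
  classical
  intro n
  induction n using Nat.strong_induction_on with
  | _ n ih =>
  intro t hn
  have hq := quot_formula hℓ t
  have hsplit := card_split hℓ b t
  have hct := hc t
  rcases (Finset.univ.filter fun i : Fin d =>
      ℓ (b i) < (t : WithBot ℝ)).eq_empty_or_nonempty with he | hne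
  · have hLt0 : sublevelLT κ ℓ hℓ t = ⊥ := by
      rw [eq_bot_iff]
      intro v hv
      rcases eq_or_ne v 0 with rfl | hv0
      · exact Submodule.zero_mem _
      · exfalso
        obtain ⟨i, hi⟩ := value_mem hℓ b hc hv0
        have : i ∈ Finset.univ.filter fun i : Fin d => ℓ (b i) < (t : WithBot ℝ) := by
          refine Finset.mem_filter.mpr ⟨Finset.mem_univ i, ?_⟩
          rw [hi]
          exact hv
        rw [he] at this
        exact absurd this (Finset.notMem_empty i)
    have h0 : finrank κ (sublevelLT κ ℓ hℓ t) = 0 := by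
      rw [hLt0]
      exact finrank_bot κ V
    have he' : (Finset.univ.filter fun i : Fin d => ℓ (b i) < (t : WithBot ℝ)).card = 0 := by
      rw [he]; rfl
    omega
  · obtain ⟨i₀, hi₀, hsup⟩ := Finset.exists_mem_eq_sup _ hne (fun i => ℓ (b i))
    have hbne : ℓ (b i₀) ≠ ⊥ := fun h => b.ne_zero i₀ ((hℓ.1 _).mp h)
    obtain ⟨s₀, hs₀⟩ := WithBot.ne_bot_iff_exists.mp hbne
    have hs₀t : (s₀ : ℝ) < t := by
      have := (Finset.mem_filter.mp hi₀).2
      rw [← hs₀] at this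
      exact_mod_cast this
    have hsup' : ∀ i : Fin d, ℓ (b i) < (t : WithBot ℝ) → ℓ (b i) ≤ (s₀ : WithBot ℝ) := by
      intro i hi
      have : i ∈ Finset.univ.filter fun i : Fin d => ℓ (b i) < (t : WithBot ℝ) :=
        Finset.mem_filter.mpr ⟨Finset.mem_univ i, hi⟩
      calc ℓ (b i) ≤ _ := Finset.le_sup (f := fun i => ℓ (b i)) this
      _ = ℓ (b i₀) := hsup
      _ = (s₀ : WithBot ℝ) := hs₀.symm
    have hLts : sublevelLT κ ℓ hℓ t = sublevelLE κ ℓ hℓ s₀ := by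
      apply le_antisymm
      · intro v hv
        rcases eq_or_ne v 0 with rfl | hv0
        · exact Submodule.zero_mem _
        · obtain ⟨i, hi⟩ := value_mem hℓ b hc hv0
          have hlt : ℓ (b i) < (t : WithBot ℝ) := by rw [hi]; exact hv
          have := hsup' i hlt
          rw [hi] at this
          exact this
      · intro v hv
        have h1 : ℓ v ≤ (s₀ : WithBot ℝ) := hv
        exact (mem_sublevelLT hℓ).mpr (lt_of_le_of_lt h1 (by exact_mod_cast hs₀t))
    have hfilter : (Finset.univ.filter fun i : Fin d => ℓ (b i) ≤ (s₀ : WithBot ℝ)) =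
        (Finset.univ.filter fun i : Fin d => ℓ (b i) < (t : WithBot ℝ)) := by
      ext i
      simp only [Finset.mem_filter, Finset.mem_univ, true_and]
      constructor
      · intro h
        exact lt_of_le_of_lt h (by exact_mod_cast hs₀t)
      · exact hsup' i
    have hcardlt : (Finset.univ.filter fun i : Fin d =>
        ℓ (b i) < (s₀ : WithBot ℝ)).card < n := by
      rw [← hn]
      apply Finset.card_lt_card
      constructor
      · intro i hi
        simp only [Finset.mem_filter, Finset.mem_univ, true_and] at hi ⊢
        exact lt_of_lt_of_le hi (le_of_lt (by exact_mod_cast hs₀t))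
      · intro hsub
        have := hsub hi₀
        simp only [Finset.mem_filter, Finset.mem_univ, true_and] at this
        rw [← hs₀] at this
        exact lt_irrefl _ this
    have ihs := ih _ hcardlt s₀ rfl
    have hLtrank : finrank κ (sublevelLT κ ℓ hℓ t) = finrank κ (sublevelLE κ ℓ hℓ s₀) := by
      rw [hLts]
    rw [hfilter] at ihs
    omega

lemma star_of_counts (hc : CountsCond hℓ b) : StarCond hℓ b := by
  classical
  intro t
  have h1 := span_le_LE hℓ b t
  have h2 : finrank κ (Submodule.span κ (b '' {i | ℓ (b i) ≤ (t : WithBot ℝ)})) =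
      (Finset.univ.filter fun i : Fin d => ℓ (b i) ≤ (t : WithBot ℝ)).card := by
    rw [finrank_span_image, card_subtype_filter]
    apply Finset.card_bij (fun i _ => i) <;> simp [Set.mem_setOf_eq]
  have h3 := frank_eq hℓ b hc _ t rfl
  have := Submodule.eq_of_le_of_finrank_le h1 (le_of_eq (h3.trans h2.symm))
  exact le_of_eq this.symm

end OrthAux6

/-- For a finite-dimensional filtered vector space `(V, ℓ)`, a basis `{v₁, …, v_d}` is
`ℓ`-orthogonal iff for every `t ∈ ℝ` the number of `i` with `ℓ (vᵢ) = t` equals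
`dim (V^{≤t} / V^{<t})`. -/
theorem orthogonal_basis_iff_multiplicity (κ : Type u) [Field κ] {V : Type v}
    [AddCommGroup V] [Module κ V] [FiniteDimensional κ V] (ℓ : V → WithBot ℝ)
    (hℓ : IsVectorFiltration κ ℓ) {d : ℕ} (b : Module.Basis (Fin d) κ V) :
    IsOrthogonal κ ℓ (Set.range fun i => b i) ↔
      ∀ t : ℝ,
        (Finset.univ.filter fun i : Fin d => ℓ (b i) = (t : WithBot ℝ)).card =
          Module.finrank κ
            (↥(sublevelLE κ ℓ hℓ t) ⧸
              Submodule.comap (sublevelLE κ ℓ hℓ t).subtype (sublevelLT κ ℓ hℓ t)) := by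
  constructor
  · intro hO t
    exact counts_of_star hℓ b (star_of_orth hℓ b hO) t
  · intro hc
    exact orth_of_star hℓ b (star_of_counts hℓ b hc)
end

section
/- Let (A, ∂, ℓ) be an ascending chain complex over a field κ such that each (A_k, ℓ_k) satisfies the best approximation property and the homology vanishes: ker ∂_k = im ∂_{k+1} for all k. Then there exist index sets 𝓘_k (k ∈ ℤ) and families (y^{k}_j)_{j ∈ 𝓘_k} of elements of A_k such that for every k the set {∂_{k+1} y^{k+1}_i : i ∈ 𝓘_{k+1}} ∪ {y^{k}_j : j ∈ 𝓘_k} is an ℓ_k-orthogonal basis of A_k. -/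
open scoped Classical

universe u v

/-- Transport along an equality of indices. -/
def castL (κ : Type u) [Field κ] {C : ℤ → Type v} [∀ k, AddCommGroup (C k)]
    [∀ k, Module κ (C k)] {i j : ℤ} (h : i = j) : C i →ₗ[κ] C j := by
  subst h; exact LinearMap.id

/-- The boundary map `∂_{k+1} : C_{k+1} → C_k`, viewed as landing in `C_k`. -/
def bdryMap (κ : Type u) [Field κ] {C : ℤ → Type v} [∀ k, AddCommGroup (C k)]
    [∀ k, Module κ (C k)] (d : ∀ k : ℤ, C k →ₗ[κ] C (k - 1)) (k : ℤ) :
    C (k + 1) →ₗ[κ] C k :=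
  (castL κ (show k + 1 - 1 = k by omega)).comp (d (k + 1))

/-- `(C, d, ℓ)` is an ascending chain complex over `κ`. -/
def IsAscendingComplex (κ : Type u) [Field κ] {C : ℤ → Type v} [∀ k, AddCommGroup (C k)]
    [∀ k, Module κ (C k)] (d : ∀ k : ℤ, C k →ₗ[κ] C (k - 1))
    (ℓ : ∀ k : ℤ, C k → WithBot ℝ) : Prop :=
  (∀ (k : ℤ) (x : C k), d (k - 1) (d k x) = 0) ∧
    (∀ k : ℤ, IsFiltrationFn κ (ℓ k)) ∧
      ∀ (k : ℤ) (x : C k), ℓ (k - 1) (d k x) ≤ ℓ k x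

section Prelim
variable {κ : Type u} [Field κ] {V : Type v} [AddCommGroup V] [Module κ V]
  {ℓ : V → WithBot ℝ}

lemma uord {a b c : WithBot ℝ} (h1 : c ≤ max a b) (h2 : a ≤ max c b) (hba : b < a) : c = a := by
  rcases lt_or_ge c a with hlt | hge
  · exact absurd h2 (not_le.2 (max_lt hlt hba))
  · exact le_antisymm (h1.trans (max_le le_rfl hba.le)) hge

lemma filt_zero (hl : IsFiltrationFn κ ℓ) : ℓ 0 = ⊥ := (hl.1 0).2 rfl

lemma filt_ne_bot (hl : IsFiltrationFn κ ℓ) {v : V} (hv : v ≠ 0) : ℓ v ≠ ⊥ :=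
  fun h => hv ((hl.1 v).1 h)

lemma filt_neg (hl : IsFiltrationFn κ ℓ) (v : V) : ℓ (-v) = ℓ v := by
  have := hl.2.1 (-1) v (by norm_num)
  simpa using this

lemma filt_sub_le (hl : IsFiltrationFn κ ℓ) (v w : V) : ℓ (v - w) ≤ max (ℓ v) (ℓ w) := by
  rw [sub_eq_add_neg]
  exact (hl.2.2 v (-w)).trans (by rw [filt_neg hl])

/-- If `u` has minimal `ℓ` in its coset mod `W`, then `u` is pointwise orthogonal to `W`. -/
lemma filt_ptOrth (hl : IsFiltrationFn κ ℓ) (W : Submodule κ V) (u : V)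
    (hmin : ∀ w ∈ W, ℓ u ≤ ℓ (u + w)) : ∀ w ∈ W, ℓ (u + w) = max (ℓ u) (ℓ w) := by
  intro w hw
  rcases le_or_gt (ℓ w) (ℓ u) with h | h
  · rw [max_eq_left h]
    exact le_antisymm ((hl.2.2 u w).trans (max_le le_rfl h)) (hmin w hw)
  · rw [max_eq_right h.le]
    have h2 : ℓ w ≤ max (ℓ (u + w)) (ℓ u) := by
      have := filt_sub_le hl (u + w) u
      simpa using this
    have hle : ℓ w ≤ ℓ (u + w) := by
      rcases max_cases (ℓ (u + w)) (ℓ u) with ⟨he, _⟩ | ⟨he, _⟩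
      · rwa [he] at h2
      · rw [he] at h2; exact absurd (lt_of_le_of_lt h2 h) (lt_irrefl _)
    exact le_antisymm ((hl.2.2 u w).trans (max_le h.le le_rfl)) hle

lemma filt_sum_le (hl : IsFiltrationFn κ ℓ) {γ : Type*} (T : Finset γ) (g : γ → V) :
    ℓ (∑ x ∈ T, g x) ≤ T.sup (fun x => ℓ (g x)) := by
  induction T using Finset.cons_induction with
  | empty => simp [filt_zero hl]
  | cons a s ha ih =>
      rw [Finset.sum_cons, Finset.sup_cons]
      exact (hl.2.2 _ _).trans (max_le_max le_rfl ih)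

lemma filt_sum_smul_le (hl : IsFiltrationFn κ ℓ) {γ : Type*} (T : Finset γ) (c : γ → κ)
    (g : γ → V) :
    ℓ (∑ x ∈ T, c x • g x) ≤ (T.filter fun x => c x ≠ 0).sup (fun x => ℓ (g x)) := by
  have hsum : ∑ x ∈ (T.filter fun x => c x ≠ 0), c x • g x = ∑ x ∈ T, c x • g x := by
    refine Finset.sum_subset (Finset.filter_subset _ _) ?_
    intro x hx hnx
    have : c x = 0 := by
      by_contra h
      exact hnx (Finset.mem_filter.2 ⟨hx, h⟩)
    simp [this]
  rw [← hsum]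
  refine (filt_sum_le hl _ _).trans ?_
  refine Finset.sup_mono_fun ?_
  intro x hx
  have hcx : c x ≠ 0 := (Finset.mem_filter.1 hx).2
  rw [hl.2.1 (c x) (g x) hcx]

end Prelim

section OneDegree
variable {κ : Type u} [Field κ] {A : Type v} {C : Type v}
  [AddCommGroup A] [Module κ A] [AddCommGroup C] [Module κ C]

variable (f : A →ₗ[κ] C) (ℓA : A → WithBot ℝ)

lemma exists_minLift (hbaA : HasBestApprox κ ℓA) (hlA : IsFiltrationFn κ ℓA) (b : C)
    (hb : b ∈ LinearMap.range f) :
    ∃ a : A, f a = b ∧ ∀ a' : A, f a' = b → ℓA a ≤ ℓA a' := by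
  by_cases h0 : b = 0
  · subst h0
    refine ⟨0, map_zero f, ?_⟩
    intro a' _
    rw [filt_zero hlA]; exact bot_le
  · obtain ⟨a, ha⟩ := hb
    have haK : a ∉ LinearMap.ker f := by
      intro hk
      rw [LinearMap.mem_ker, ha] at hk; exact h0 hk
    obtain ⟨w₀, hw₀, hmin⟩ := hbaA (LinearMap.ker f) a haK
    refine ⟨a - w₀, by rw [map_sub, ha, LinearMap.mem_ker.1 hw₀, sub_zero], ?_⟩
    intro a' ha'
    have : a - a' ∈ LinearMap.ker f := by
      rw [LinearMap.mem_ker, map_sub, ha, ha', sub_self]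
    have := hmin _ this
    rwa [sub_sub_cancel] at this

variable (hbaA : HasBestApprox κ ℓA) (hlA : IsFiltrationFn κ ℓA)

/-- A minimal-filtration lift of `b` along `f`, when `b ∈ range f`. -/
noncomputable def minLift (b : C) : A :=
  if h : b ∈ LinearMap.range f then (exists_minLift f ℓA hbaA hlA b h).choose else 0

lemma f_minLift {b : C} (hb : b ∈ LinearMap.range f) : f (minLift f ℓA hbaA hlA b) = b := by
  rw [minLift, dif_pos hb]
  exact (exists_minLift f ℓA hbaA hlA b hb).choose_spec.1

lemma minLift_min {b : C} (hb : b ∈ LinearMap.range f)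
    {a : A} (ha : f a = b) : ℓA (minLift f ℓA hbaA hlA b) ≤ ℓA a := by
  rw [minLift, dif_pos hb]
  exact (exists_minLift f ℓA hbaA hlA b hb).choose_spec.2 a ha

lemma minLift_zero : minLift f ℓA hbaA hlA 0 = 0 := by
  have h1 : ℓA (minLift f ℓA hbaA hlA 0) ≤ ℓA 0 :=
    minLift_min f ℓA hbaA hlA (Submodule.zero_mem _) (map_zero f)
  rw [filt_zero hlA, le_bot_iff] at h1
  exact (hlA.1 _).1 h1

/-- The quotient filtration on `range f`. -/
noncomputable def lamF : C → WithBot ℝ := fun b => ℓA (minLift f ℓA hbaA hlA b)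

lemma lamF_zero : lamF f ℓA hbaA hlA 0 = ⊥ := by
  rw [lamF, minLift_zero, filt_zero hlA]

lemma lamF_le (a : A) : lamF f ℓA hbaA hlA (f a) ≤ ℓA a :=
  minLift_min f ℓA hbaA hlA ⟨a, rfl⟩ rfl

lemma lamF_ne_bot {b : C} (hb : b ∈ LinearMap.range f) (h0 : b ≠ 0) :
    lamF f ℓA hbaA hlA b ≠ ⊥ := by
  rw [lamF]
  refine filt_ne_bot hlA ?_
  intro h
  apply h0
  rw [← f_minLift f ℓA hbaA hlA hb, h, map_zero]

lemma lamF_smul {c : κ} (hc : c ≠ 0) (b : C) (hb : b ∈ LinearMap.range f) :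
    lamF f ℓA hbaA hlA (c • b) = lamF f ℓA hbaA hlA b := by
  have hcb : c • b ∈ LinearMap.range f := Submodule.smul_mem _ _ hb
  apply le_antisymm
  · refine (minLift_min f ℓA hbaA hlA hcb (a := c • minLift f ℓA hbaA hlA b) ?_).trans ?_
    · rw [map_smul, f_minLift f ℓA hbaA hlA hb]
    · rw [hlA.2.1 c _ hc]; exact le_rfl
  · refine (minLift_min f ℓA hbaA hlA hb (a := c⁻¹ • minLift f ℓA hbaA hlA (c • b)) ?_).trans ?_
    · rw [map_smul, f_minLift f ℓA hbaA hlA hcb, inv_smul_smul₀ hc]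
    · rw [hlA.2.1 c⁻¹ _ (inv_ne_zero hc)]; exact le_rfl

lemma lamF_neg (b : C) (hb : b ∈ LinearMap.range f) :
    lamF f ℓA hbaA hlA (-b) = lamF f ℓA hbaA hlA b := by
  have := lamF_smul f ℓA hbaA hlA (c := (-1 : κ)) (by norm_num) b hb
  simpa using this

lemma lamF_add_le {b b' : C} (hb : b ∈ LinearMap.range f) (hb' : b' ∈ LinearMap.range f) :
    lamF f ℓA hbaA hlA (b + b') ≤ max (lamF f ℓA hbaA hlA b) (lamF f ℓA hbaA hlA b') := by
  refine (minLift_min f ℓA hbaA hlA (Submodule.add_mem _ hb hb')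
    (a := minLift f ℓA hbaA hlA b + minLift f ℓA hbaA hlA b') ?_).trans ?_
  · rw [map_add, f_minLift f ℓA hbaA hlA hb, f_minLift f ℓA hbaA hlA hb']
  · exact hlA.2.2 _ _

lemma lamF_sub_le {b b' : C} (hb : b ∈ LinearMap.range f) (hb' : b' ∈ LinearMap.range f) :
    lamF f ℓA hbaA hlA (b - b') ≤ max (lamF f ℓA hbaA hlA b) (lamF f ℓA hbaA hlA b') := by
  rw [sub_eq_add_neg]
  refine (lamF_add_le f ℓA hbaA hlA hb (Submodule.neg_mem _ hb')).trans ?_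
  rw [lamF_neg f ℓA hbaA hlA _ hb']

/-- Best approximation for the quotient filtration within `range f`. -/
lemma lamF_ba (W : Submodule κ C) (hW : W ≤ LinearMap.range f) {v : C}
    (hv : v ∈ LinearMap.range f) (hvW : v ∉ W) :
    ∃ w₀ ∈ W, ∀ w ∈ W, lamF f ℓA hbaA hlA (v - w₀) ≤ lamF f ℓA hbaA hlA (v - w) := by
  obtain ⟨a, ha⟩ := hv
  have haW : a ∉ Submodule.comap f W := by
    intro h
    rw [Submodule.mem_comap, ha] at h
    exact hvW h
  obtain ⟨a₀, ha₀, hmin⟩ := hbaA (Submodule.comap f W) a haW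
  refine ⟨f a₀, ha₀, ?_⟩
  intro w hw
  have hvw : v - w ∈ LinearMap.range f := Submodule.sub_mem _ ⟨a, ha⟩ (hW hw)
  have h1 : lamF f ℓA hbaA hlA (v - f a₀) ≤ ℓA (a - a₀) := by
    refine minLift_min f ℓA hbaA hlA (Submodule.sub_mem _ ⟨a, ha⟩ (hW ha₀)) ?_
    rw [map_sub, ha]
  refine h1.trans ?_
  have hu : a - minLift f ℓA hbaA hlA (v - w) ∈ Submodule.comap f W := by
    rw [Submodule.mem_comap, map_sub, ha, f_minLift f ℓA hbaA hlA hvw]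
    simpa using hw
  have := hmin _ hu
  rwa [sub_sub_cancel] at this

end OneDegree

section Core
variable {κ : Type u} [Field κ] {A : Type v} {C : Type v}
  [AddCommGroup A] [Module κ A] [AddCommGroup C] [Module κ C]

lemma one_degree (f : A →ₗ[κ] C) (ℓA : A → WithBot ℝ) (ℓC : C → WithBot ℝ)
    (hlA : IsFiltrationFn κ ℓA) (hlC : IsFiltrationFn κ ℓC)
    (hbaA : HasBestApprox κ ℓA) (hbaC : HasBestApprox κ ℓC) :
    ∃ (X : Set C) (m : C → A),
      X ⊆ (LinearMap.range f : Set C) ∧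
      (0 : C) ∉ X ∧
      Submodule.span κ X = LinearMap.range f ∧
      (∀ x ∈ X, f (m x) = x) ∧
      (∀ T : Finset C, ↑T ⊆ X → ∀ c : C → κ,
        ℓC (∑ x ∈ T, c x • x) = (T.filter fun x => c x ≠ 0).sup ℓC) ∧
      (∀ T : Finset C, ↑T ⊆ X → ∀ c : C → κ,
        ℓA (∑ x ∈ T, c x • m x) = (T.filter fun x => c x ≠ 0).sup (fun x => ℓA (m x)) ∧
        ∀ w ∈ LinearMap.ker f, ℓA (∑ x ∈ T, c x • m x) ≤ ℓA (∑ x ∈ T, c x • m x + w)) := by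
  classical
  set B := LinearMap.range f with hB
  set lam : C → WithBot ℝ := lamF f ℓA hbaA hlA with hlamdef
  have hlam_zero : lam 0 = ⊥ := lamF_zero f ℓA hbaA hlA
  have hlam_le : ∀ a : A, lam (f a) ≤ ℓA a := lamF_le f ℓA hbaA hlA
  have hlam_nb : ∀ b ∈ B, b ≠ 0 → lam b ≠ ⊥ := fun b hb h0 => lamF_ne_bot f ℓA hbaA hlA hb h0
  have hlam_smul : ∀ (c : κ), c ≠ 0 → ∀ b ∈ B, lam (c • b) = lam b :=
    fun c hc b hb => lamF_smul f ℓA hbaA hlA hc b hb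
  have hlam_add : ∀ b ∈ B, ∀ b' ∈ B, lam (b + b') ≤ max (lam b) (lam b') :=
    fun b hb b' hb' => lamF_add_le f ℓA hbaA hlA hb hb'
  have hlam_sub : ∀ b ∈ B, ∀ b' ∈ B, lam (b - b') ≤ max (lam b) (lam b') :=
    fun b hb b' hb' => lamF_sub_le f ℓA hbaA hlA hb hb'
  have hlam_ba : ∀ (W : Submodule κ C), W ≤ B → ∀ v ∈ B, v ∉ W →
      ∃ w₀ ∈ W, ∀ w ∈ W, lam (v - w₀) ≤ lam (v - w) :=
    fun W hW v hv hvW => lamF_ba f ℓA hbaA hlA W hW hv hvW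
  -- the invariant
  set K : Set C → Prop := fun X =>
    X ⊆ (B : Set C) ∧ (∀ x ∈ X, x ≠ 0) ∧
    ∀ (t : ℝ) (T : Finset C), ↑T ⊆ X → (∀ x ∈ T, lam x = (t : WithBot ℝ)) →
      ∀ c : C → κ, (∃ x ∈ T, c x ≠ 0) →
        lam (∑ x ∈ T, c x • x) = (t : WithBot ℝ) ∧
        ℓC (∑ x ∈ T, c x • x) = (T.filter fun x => c x ≠ 0).sup ℓC ∧
        ∀ q ∈ B, lam q < (t : WithBot ℝ) →
          ℓC (∑ x ∈ T, c x • x) ≤ ℓC (∑ x ∈ T, c x • x + q) with hK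
  -- Zorn
  have hchain : ∀ c ⊆ setOf K, IsChain (· ⊆ ·) c → c.Nonempty → ∃ ub ∈ setOf K, ∀ s ∈ c, s ⊆ ub := by
    intro ch hchK hch hne
    have hfin : ∀ (T : Finset C), ↑T ⊆ ⋃₀ ch → ∃ Y ∈ ch, ↑T ⊆ Y := by
      intro T
      induction T using Finset.induction with
      | empty =>
          intro _
          obtain ⟨Y, hY⟩ := hne
          exact ⟨Y, hY, by simp⟩
      | @insert a s ha ih =>
          intro hsub
          have hs : (↑s : Set C) ⊆ ⋃₀ ch := by
            refine Set.Subset.trans ?_ hsub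
            intro z hz
            simp only [Finset.coe_insert, Set.mem_insert_iff]
            right; exact hz
          obtain ⟨Y, hYch, hYs⟩ := ih hs
          have haU : a ∈ ⋃₀ ch := hsub (by simp)
          obtain ⟨Z, hZch, haZ⟩ := haU
          rcases hch.total hYch hZch with h | h
          · refine ⟨Z, hZch, ?_⟩
            intro z hz
            simp only [Finset.coe_insert, Set.mem_insert_iff] at hz
            rcases hz with rfl | hz
            · exact haZ
            · exact h (hYs hz)
          · refine ⟨Y, hYch, ?_⟩
            intro z hz
            simp only [Finset.coe_insert, Set.mem_insert_iff] at hz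
            rcases hz with rfl | hz
            · exact h haZ
            · exact hYs hz
    refine ⟨⋃₀ ch, ?_, fun s hs => Set.subset_sUnion_of_mem hs⟩
    refine ⟨?_, ?_, ?_⟩
    · intro x hx
      obtain ⟨Y, hYch, hxY⟩ := hx
      exact (hchK hYch).1 hxY
    · intro x hx
      obtain ⟨Y, hYch, hxY⟩ := hx
      exact (hchK hYch).2.1 x hxY
    · intro t T hT hTt c hc
      obtain ⟨Y, hYch, hTY⟩ := hfin T hT
      exact (hchK hYch).2.2 t T hTY hTt c hc
  have hempty : K ∅ := by
    refine ⟨by simp, by simp, ?_⟩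
    intro t T hT hTt c hc
    have : T = ∅ := by
      rw [← Finset.coe_empty] at hT
      exact_mod_cast Finset.coe_injective (Set.Subset.antisymm hT (by simp))
    subst this
    obtain ⟨x, hx, -⟩ := hc
    simp at hx
  obtain ⟨X, -, hXK, hXmax⟩ : ∃ X, ∅ ⊆ X ∧ Maximal K X := by
    obtain ⟨X, h1, h2⟩ := zorn_subset_nonempty (setOf K) hchain ∅ hempty
    exact ⟨X, h1, h2⟩
  obtain ⟨hXsub, hXnz, hpure⟩ := hXK
  have hXmax' : ∀ Y, K Y → X ⊆ Y → Y = X := by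
    intro Y hY hXY
    exact Set.Subset.antisymm (hXmax hY hXY) hXY
  have hcomboB : ∀ (G : Finset C) (c : C → κ), ↑G ⊆ X → ∑ x ∈ G, c x • x ∈ B := by
    intro G c hG
    exact Submodule.sum_mem _ (fun x hx => Submodule.smul_mem _ _ (hXsub (hG hx)))
  -- the mixed-levels lemma
  have hmix' : ∀ (n : ℕ) (F : Finset C), (F.image lam).card ≤ n → ↑F ⊆ X →
      ∀ c : C → κ, (∀ x ∈ F, c x ≠ 0) →
      lam (∑ x ∈ F, c x • x) = F.sup lam ∧ ℓC (∑ x ∈ F, c x • x) = F.sup ℓC := by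
    intro n
    induction n with
    | zero =>
        intro F hcard hFX c hc
        have hFe : F = ∅ := by
          have h0 : (F.image lam).card = 0 := Nat.le_zero.1 hcard
          have := Finset.card_eq_zero.1 h0
          exact Finset.image_eq_empty.1 this
        subst hFe
        simp [hlam_zero, filt_zero hlC]
    | succ n ih =>
        intro F hcard hFX c hc
        by_cases hcn : (F.image lam).card ≤ n
        · exact ih F hcn hFX c hc
        have hFne : F.Nonempty := by
          rcases Finset.eq_empty_or_nonempty F with h | h
          · exfalso; subst h; simp at hcn
          · exact h
        have hIne : (F.image lam).Nonempty := hFne.image lam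
        set tb := (F.image lam).max' hIne with htb
        obtain ⟨x₀, hx₀F, hx₀⟩ : ∃ x ∈ F, lam x = tb := by
          have h := Finset.max'_mem _ hIne
          rw [Finset.mem_image] at h
          obtain ⟨x, hx, he⟩ := h
          exact ⟨x, hx, he⟩
        have hle_tb : ∀ x ∈ F, lam x ≤ tb := by
          intro x hx
          exact Finset.le_max' _ _ (Finset.mem_image_of_mem lam hx)
        obtain ⟨t, ht⟩ : ∃ t : ℝ, tb = (t : WithBot ℝ) := by
          have hnb : tb ≠ ⊥ := by
            rw [← hx₀]
            exact hlam_nb _ (hXsub (hFX hx₀F)) (hXnz _ (hFX hx₀F))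
          obtain ⟨t, ht⟩ := WithBot.ne_bot_iff_exists.1 hnb
          exact ⟨t, ht.symm⟩
        set F₁ := F.filter (fun x => lam x = tb) with hF₁
        set F₂ := F.filter (fun x => ¬ lam x = tb) with hF₂
        set z₁ := ∑ x ∈ F₁, c x • x with hz₁
        set z₂ := ∑ x ∈ F₂, c x • x with hz₂
        have hzsplit : z₁ + z₂ = ∑ x ∈ F, c x • x :=
          Finset.sum_filter_add_sum_filter_not F _ _
        have hF₁X : ↑F₁ ⊆ X := Set.Subset.trans (by exact_mod_cast Finset.filter_subset _ F) hFX
        have hF₂X : ↑F₂ ⊆ X := Set.Subset.trans (by exact_mod_cast Finset.filter_subset _ F) hFX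
        have hz₁B : z₁ ∈ B := hcomboB _ _ hF₁X
        have hz₂B : z₂ ∈ B := hcomboB _ _ hF₂X
        have hx₀F₁ : x₀ ∈ F₁ := Finset.mem_filter.2 ⟨hx₀F, hx₀⟩
        obtain ⟨hz₁lam, hz₁lC, hz₁red⟩ :=
          hpure t F₁ hF₁X
            (fun x hx => by rw [← ht]; exact (Finset.mem_filter.1 hx).2) c
            ⟨x₀, hx₀F₁, hc x₀ hx₀F⟩
        have hcard₂ : (F₂.image lam).card ≤ n := by
          have hsub2 : F₂.image lam ⊆ (F.image lam).erase tb := by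
            intro b hb
            rw [Finset.mem_image] at hb
            obtain ⟨x, hxF₂, rfl⟩ := hb
            rw [Finset.mem_erase]
            exact ⟨(Finset.mem_filter.1 hxF₂).2,
              Finset.mem_image_of_mem lam (Finset.filter_subset _ F hxF₂)⟩
          have h1 := Finset.card_le_card hsub2
          have htbmem : tb ∈ F.image lam := Finset.max'_mem _ hIne
          have h2 := Finset.card_erase_of_mem htbmem
          omega
        obtain ⟨hz₂lam, hz₂lC⟩ := ih F₂ hcard₂ hF₂X c (fun x hx => hc x (Finset.filter_subset _ F hx))
        have hz₂lt : lam z₂ < (t : WithBot ℝ) := by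
          rw [hz₂lam]
          refine (Finset.sup_lt_iff (by exact WithBot.bot_lt_coe t)).2 ?_
          intro b hb
          have hble := hle_tb b (Finset.filter_subset _ F hb)
          have hbne := (Finset.mem_filter.1 hb).2
          rw [ht] at hble hbne
          exact lt_of_le_of_ne hble hbne
        have hFsup_lam : F.sup lam = (t : WithBot ℝ) := by
          refine le_antisymm (Finset.sup_le (fun x hx => by rw [← ht]; exact hle_tb x hx)) ?_
          rw [← ht, ← hx₀]
          exact Finset.le_sup hx₀F
        have hlamz : lam (z₁ + z₂) = (t : WithBot ℝ) := by
          rw [← hz₁lam]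
          refine uord (b := lam z₂) ?_ ?_ ?_
          · exact hlam_add _ hz₁B _ hz₂B
          · have h := hlam_sub _ (Submodule.add_mem _ hz₁B hz₂B) _ hz₂B
            rwa [add_sub_cancel_right] at h
          · rw [hz₁lam]; exact hz₂lt
        have hFsup_lC : F.sup ℓC = max (F₁.sup ℓC) (F₂.sup ℓC) := by
          conv_lhs => rw [← Finset.filter_union_filter_not_eq (fun x => lam x = tb) F]
          rw [Finset.sup_union]
        have hfilter₁ : F₁.filter (fun x => c x ≠ 0) = F₁ :=
          Finset.filter_true_of_mem (fun x hx => hc x (Finset.filter_subset _ F hx))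
        rw [hfilter₁] at hz₁lC
        have hred : ℓC z₁ ≤ ℓC (z₁ + z₂) := by
          refine hz₁red z₂ hz₂B hz₂lt
        constructor
        · rw [← hzsplit, hlamz, hFsup_lam]
        · rw [← hzsplit, hFsup_lC, ← hz₁lC, ← hz₂lC]
          rcases le_or_gt (ℓC z₂) (ℓC z₁) with h | h
          · rw [max_eq_left h]
            exact le_antisymm ((hlC.2.2 _ _).trans (max_le le_rfl h)) hred
          · rw [max_eq_right h.le]
            refine uord (b := ℓC z₁) ?_ ?_ h
            · rw [add_comm z₁ z₂]
              exact hlC.2.2 z₂ z₁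
            · have h2 := filt_sub_le hlC (z₁ + z₂) z₁
              rw [add_sub_cancel_left] at h2
              exact h2
  have hmix : ∀ (T : Finset C), ↑T ⊆ X → ∀ c : C → κ,
      lam (∑ x ∈ T, c x • x) = (T.filter fun x => c x ≠ 0).sup lam ∧
      ℓC (∑ x ∈ T, c x • x) = (T.filter fun x => c x ≠ 0).sup ℓC := by
    intro T hT c
    set F := T.filter (fun x => c x ≠ 0) with hF
    have hFX : ↑F ⊆ X := Set.Subset.trans (by exact_mod_cast Finset.filter_subset _ T) hT
    have hsum : ∑ x ∈ F, c x • x = ∑ x ∈ T, c x • x := by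
      refine Finset.sum_subset (Finset.filter_subset _ _) ?_
      intro x hx hnx
      have : c x = 0 := by
        by_contra h
        exact hnx (Finset.mem_filter.2 ⟨hx, h⟩)
      simp [this]
    have hcnz : ∀ x ∈ F, c x ≠ 0 := fun x hx => (Finset.mem_filter.1 hx).2
    obtain ⟨h1, h2⟩ := hmix' (F.image lam).card F le_rfl hFX c hcnz
    rw [← hsum]
    exact ⟨h1, h2⟩
  -- maximality implies spanning
  have hspan : Submodule.span κ X = B := by
    have hle : Submodule.span κ X ≤ B := Submodule.span_le.2 hXsub
    by_contra hne
    obtain ⟨v, hvB, hvS⟩ := SetLike.exists_of_lt (lt_of_le_of_ne hle hne)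
    obtain ⟨w₀, hw₀, hw₀min⟩ := hlam_ba (Submodule.span κ X) hle v hvB hvS
    set v₁ := v - w₀ with hv₁def
    have hv₁B : v₁ ∈ B := Submodule.sub_mem _ hvB (hle hw₀)
    have hv₁S : v₁ ∉ Submodule.span κ X := by
      intro h
      have : v ∈ Submodule.span κ X := by
        have := Submodule.add_mem _ h hw₀
        rwa [hv₁def, sub_add_cancel] at this
      exact hvS this
    have hv₁min : ∀ w ∈ Submodule.span κ X, lam v₁ ≤ lam (v₁ + w) := by
      intro w hw
      have h := hw₀min (w₀ - w) (Submodule.sub_mem _ hw₀ hw)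
      have he : v - (w₀ - w) = v₁ + w := by rw [hv₁def]; abel
      rwa [he] at h
    have hv₁0 : v₁ ≠ 0 := fun h => hv₁S (h ▸ Submodule.zero_mem _)
    obtain ⟨t, ht⟩ : ∃ t : ℝ, lam v₁ = (t : WithBot ℝ) := by
      obtain ⟨t, ht⟩ := WithBot.ne_bot_iff_exists.1 (hlam_nb _ hv₁B hv₁0)
      exact ⟨t, ht.symm⟩
    set Ult : Submodule κ C :=
      { carrier := {b | b ∈ B ∧ lam b < (t : WithBot ℝ)}
        add_mem' := by
          rintro a b ⟨haB, ha⟩ ⟨hbB, hb⟩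
          exact ⟨Submodule.add_mem _ haB hbB,
            lt_of_le_of_lt (hlam_add a haB b hbB) (max_lt ha hb)⟩
        zero_mem' := ⟨Submodule.zero_mem _, by rw [hlam_zero]; exact WithBot.bot_lt_coe t⟩
        smul_mem' := by
          rintro r a ⟨haB, ha⟩
          by_cases hr : r = 0
          · subst hr
            exact ⟨by simp [Submodule.zero_mem], by simp [hlam_zero, WithBot.bot_lt_coe]⟩
          · exact ⟨Submodule.smul_mem _ _ haB, by rwa [hlam_smul r hr a haB]⟩ } with hUltdef
    set Xt := X ∩ {x | lam x = (t : WithBot ℝ)} with hXtdef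
    have hXtX : Xt ⊆ X := Set.inter_subset_left
    set Wt := Submodule.span κ Xt ⊔ Ult with hWtdef
    have hUltB : Ult ≤ B := fun q hq => hq.1
    have hWtB : Wt ≤ B := sup_le (Submodule.span_le.2 (Set.Subset.trans hXtX hXsub)) hUltB
    have hspanXt : ∀ z ∈ Submodule.span κ Xt, z ∈ B ∧ lam z ≤ (t : WithBot ℝ) := by
      intro z hz
      refine Submodule.span_induction ?_ ?_ ?_ ?_ hz
      · intro y hy
        exact ⟨hXsub (hXtX hy), le_of_eq hy.2⟩
      · exact ⟨Submodule.zero_mem _, by rw [hlam_zero]; exact bot_le⟩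
      · rintro a b _ _ ⟨haB, hla⟩ ⟨hbB, hlb⟩
        exact ⟨Submodule.add_mem _ haB hbB, (hlam_add a haB b hbB).trans (max_le hla hlb)⟩
      · rintro r a _ ⟨haB, hla⟩
        by_cases hr : r = 0
        · subst hr
          refine ⟨by simp [Submodule.zero_mem], by simp [hlam_zero]⟩
        · exact ⟨Submodule.smul_mem _ _ haB, by rwa [hlam_smul r hr a haB]⟩
    have hWtlam : ∀ w ∈ Wt, lam w ≤ (t : WithBot ℝ) := by
      intro w hw
      obtain ⟨z, hz, q, hq, rfl⟩ := Submodule.mem_sup.1 hw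
      obtain ⟨hzB, hzlam⟩ := hspanXt z hz
      exact (hlam_add z hzB q hq.1).trans (max_le hzlam hq.2.le)
    have hv₁Wt : v₁ ∉ Wt := by
      intro h
      obtain ⟨z, hz, q, hq, hzq⟩ := Submodule.mem_sup.1 h
      have hzX : z ∈ Submodule.span κ X := Submodule.span_mono hXtX hz
      have h1 := hv₁min (-z) (Submodule.neg_mem _ hzX)
      have he : v₁ + -z = q := by rw [← hzq]; abel
      rw [he, ht] at h1
      exact absurd (lt_of_le_of_lt h1 hq.2) (lt_irrefl _)
    obtain ⟨u₀, hu₀, hu₀min⟩ := hbaC Wt v₁ hv₁Wt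
    set x := v₁ - u₀ with hxdef
    have hxmin : ∀ w ∈ Wt, ℓC x ≤ ℓC (x + w) := by
      intro w hw
      have h := hu₀min (u₀ + w) (Submodule.add_mem _ hu₀ hw)
      have he : v₁ - (u₀ + w) = x + -w := by rw [hxdef]; abel
      rw [he] at h
      have h2 := hu₀min (u₀ - w) (Submodule.sub_mem _ hu₀ hw)
      have he2 : v₁ - (u₀ - w) = x + w := by rw [hxdef]; abel
      rwa [he2] at h2
    have hcrit : ∀ w ∈ Wt, ℓC (x + w) = max (ℓC x) (ℓC w) := filt_ptOrth hlC Wt x hxmin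
    have hxB : x ∈ B := Submodule.sub_mem _ hv₁B (hWtB hu₀)
    obtain ⟨z₀, hz₀, q₀, hq₀, hzq₀⟩ := Submodule.mem_sup.1 hu₀
    have hxw_ge : ∀ w ∈ Submodule.span κ X, (t : WithBot ℝ) ≤ lam (x + w) := by
      intro w hw
      set P := v₁ + (w - z₀) with hPdef
      have hz₀X : z₀ ∈ Submodule.span κ X := Submodule.span_mono hXtX hz₀
      have hPmin : lam v₁ ≤ lam P := hv₁min _ (Submodule.sub_mem _ hw hz₀X)
      have hPB : P ∈ B := Submodule.add_mem _ hv₁B (Submodule.sub_mem _ (hle hw) (hle hz₀X))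
      have hxwP : x + w = P - q₀ := by rw [hxdef, hPdef, ← hzq₀]; abel
      have h1 : lam (P - q₀) ≤ max (lam P) (lam q₀) := hlam_sub _ hPB _ hq₀.1
      have h2 : lam P ≤ max (lam (P - q₀)) (lam q₀) := by
        have h3 := hlam_add _ (Submodule.sub_mem _ hPB hq₀.1) _ hq₀.1
        have he : P - q₀ + q₀ = P := by abel
        rwa [he] at h3
      have hq₀lt : lam q₀ < lam P := lt_of_lt_of_le (ht ▸ hq₀.2) hPmin
      have h4 := uord h1 h2 hq₀lt
      rw [hxwP, h4]
      exact ht ▸ hPmin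
    have hxlam : lam x = (t : WithBot ℝ) := by
      refine le_antisymm ?_ ?_
      · refine (hlam_sub _ hv₁B _ (hWtB hu₀)).trans (max_le (le_of_eq ht) (hWtlam u₀ hu₀))
      · have := hxw_ge 0 (Submodule.zero_mem _)
        simpa using this
    have hx0 : x ≠ 0 := by
      intro h
      rw [h, hlam_zero] at hxlam
      exact (WithBot.bot_ne_coe) hxlam
    have hxS : x ∉ Submodule.span κ X := by
      intro h
      have h1 := hxw_ge (-x) (Submodule.neg_mem _ h)
      rw [add_neg_cancel, hlam_zero] at h1
      exact absurd h1 (by simp)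
    have hxX : x ∉ X := fun h => hxS (Submodule.subset_span h)
    have hK' : K (insert x X) := by
      refine ⟨?_, ?_, ?_⟩
      · intro z hz
        rcases hz with rfl | hz
        · exact hxB
        · exact hXsub hz
      · intro z hz
        rcases hz with rfl | hz
        · exact hx0
        · exact hXnz z hz
      · intro t' T hT htT c hcex
        by_cases hxT : x ∈ T
        case neg =>
          have hTX : ↑T ⊆ X := by
            intro z hz
            rcases hT hz with rfl | h
            · exact absurd hz hxT
            · exact h
          exact hpure t' T hTX htT c hcex
        case pos =>
          have ht' : (t' : WithBot ℝ) = (t : WithBot ℝ) := by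
            rw [← htT x hxT, hxlam]
          have ht'' : t = t' := by exact_mod_cast ht'.symm
          subst ht''
          set T' := T.erase x with hT'def
          have hT'X : ↑T' ⊆ X := by
            intro z hz
            have hz' := Finset.mem_coe.1 hz
            rcases hT (Finset.mem_coe.2 (Finset.mem_of_mem_erase hz')) with rfl | h
            · exact absurd rfl (Finset.ne_of_mem_erase hz')
            · exact h
          have hzeq : ∑ y ∈ T, c y • y = c x • x + ∑ y ∈ T', c y • y :=
            (Finset.add_sum_erase T _ hxT).symm
          by_cases hcx : c x = 0
          ·
            have hzeq' : ∑ y ∈ T, c y • y = ∑ y ∈ T', c y • y := by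
              rw [hzeq, hcx, zero_smul, zero_add]
            have hcex' : ∃ y ∈ T', c y ≠ 0 := by
              obtain ⟨y, hyT, hy⟩ := hcex
              refine ⟨y, Finset.mem_erase.2 ⟨?_, hyT⟩, hy⟩
              rintro rfl
              exact hy hcx
            have hfilter : T.filter (fun y => c y ≠ 0) = T'.filter (fun y => c y ≠ 0) := by
              ext z
              simp only [Finset.mem_filter, hT'def, Finset.mem_erase]
              constructor
              · rintro ⟨hzT, hz⟩
                refine ⟨⟨?_, hzT⟩, hz⟩
                rintro rfl
                exact hz hcx
              · rintro ⟨⟨_, hzT⟩, hz⟩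
                exact ⟨hzT, hz⟩
            have hres := hpure t T' hT'X (fun y hy => htT y (Finset.mem_of_mem_erase hy)) c hcex'
            rw [hzeq', hfilter]
            exact hres
          · -- main case
            set z₁ := ∑ y ∈ T', c y • y with hz₁def
            set w := (c x)⁻¹ • z₁ with hwdef
            have hz₁span : z₁ ∈ Submodule.span κ Xt := by
              refine Submodule.sum_mem _ ?_
              intro y hy
              refine Submodule.smul_mem _ _ (Submodule.subset_span ?_)
              exact ⟨hT'X hy, htT y (Finset.mem_of_mem_erase hy)⟩
            have hwspan : w ∈ Submodule.span κ Xt := Submodule.smul_mem _ _ hz₁span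
            have hwWt : w ∈ Wt := Submodule.mem_sup_left hwspan
            have hwB : w ∈ B := hWtB hwWt
            have hwX : w ∈ Submodule.span κ X := Submodule.span_mono hXtX hwspan
            have hxplus : c x • (x + w) = ∑ y ∈ T, c y • y := by
              rw [smul_add, hwdef, smul_inv_smul₀ hcx, hzeq]
            have hxwB : x + w ∈ B := Submodule.add_mem _ hxB hwB
            have hlam_xw : lam (x + w) = (t : WithBot ℝ) := by
              refine le_antisymm ?_ (hxw_ge w hwX)
              refine (hlam_add _ hxB _ hwB).trans (max_le (le_of_eq hxlam) ?_)
              exact (hspanXt w hwspan).2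
            have hlCw : ℓC w = ℓC z₁ := by
              rw [hwdef, hlC.2.1 _ _ (inv_ne_zero hcx)]
            have hlCz₁ : ℓC z₁ = (T'.filter fun y => c y ≠ 0).sup ℓC := (hmix T' hT'X c).2
            have hfilter : T.filter (fun y => c y ≠ 0) = insert x (T'.filter fun y => c y ≠ 0) := by
              ext z
              simp only [Finset.mem_filter, Finset.mem_insert, hT'def, Finset.mem_erase]
              constructor
              · rintro ⟨hzT, hz⟩
                by_cases hzx : z = x
                · exact Or.inl hzx
                · exact Or.inr ⟨⟨hzx, hzT⟩, hz⟩
              · rintro (rfl | ⟨⟨_, hzT⟩, hz⟩)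
                · exact ⟨hxT, hcx⟩
                · exact ⟨hzT, hz⟩
            refine ⟨?_, ?_, ?_⟩
            · rw [← hxplus, hlam_smul _ hcx _ hxwB, hlam_xw]
            · rw [← hxplus, hlC.2.1 _ _ hcx, hcrit w hwWt, hfilter, Finset.sup_insert,
                hlCw, hlCz₁]
            · intro q hqB hqlt
              set q' := (c x)⁻¹ • q with hq'def
              have hq'B : q' ∈ B := Submodule.smul_mem _ _ hqB
              have hq'lt : lam q' < (t : WithBot ℝ) := by
                rwa [hq'def, hlam_smul _ (inv_ne_zero hcx) _ hqB]
              have hq'Ult : q' ∈ Ult := ⟨hq'B, hq'lt⟩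
              have hq'Wt : q' ∈ Wt := Submodule.mem_sup_right hq'Ult
              have hsum' : ∑ y ∈ T, c y • y + q = c x • (x + (w + q')) := by
                rw [hzeq, smul_add, smul_add, hwdef, hq'def, smul_inv_smul₀ hcx,
                  smul_inv_smul₀ hcx]
                abel
              have hz₁q : ℓC z₁ ≤ ℓC (z₁ + q) := by
                by_cases hne' : ∃ y ∈ T', c y ≠ 0
                · exact (hpure t T' hT'X (fun y hy => htT y (Finset.mem_of_mem_erase hy))
                    c hne').2.2 q hqB hqlt
                · have hz₁0 : z₁ = 0 := by
                    refine Finset.sum_eq_zero ?_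
                    intro y hy
                    have : c y = 0 := by
                      by_contra hcy
                      exact hne' ⟨y, hy, hcy⟩
                    simp [this]
                  rw [hz₁0, filt_zero hlC]
                  exact bot_le
              have hwq : ℓC w ≤ ℓC (w + q') := by
                have h1 : ℓC (w + q') = ℓC (z₁ + q) := by
                  have : c x • (w + q') = z₁ + q := by
                    rw [smul_add, hwdef, hq'def, smul_inv_smul₀ hcx, smul_inv_smul₀ hcx]
                  rw [← this, hlC.2.1 _ _ hcx]
                rw [h1, hlCw]
                exact hz₁q
              rw [hsum', ← hxplus, hlC.2.1 _ _ hcx, hlC.2.1 _ _ hcx,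
                hcrit w hwWt, hcrit (w + q') (Submodule.add_mem _ hwWt hq'Wt)]
              exact max_le_max le_rfl hwq
    have : insert x X = X := hXmax' _ hK' (Set.subset_insert x X)
    exact hxX (this ▸ Set.mem_insert x X)
  -- packaging
  refine ⟨X, minLift f ℓA hbaA hlA, hXsub, fun h => hXnz 0 h rfl, hspan,
    fun x hx => f_minLift f ℓA hbaA hlA (hXsub hx), fun T hT c => (hmix T hT c).2, ?_⟩
  intro T hT c
  set m : C → A := minLift f ℓA hbaA hlA with hmdef
  set u := ∑ x ∈ T, c x • m x with hudef
  set z := ∑ x ∈ T, c x • x with hzdef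
  have hfu : f u = z := by
    rw [hudef, map_sum, hzdef]
    refine Finset.sum_congr rfl ?_
    intro x hx
    rw [map_smul, hmdef, f_minLift f ℓA hbaA hlA (hXsub (hT hx))]
  have h1 : lam z ≤ ℓA u := by
    rw [← hfu]
    exact hlam_le u
  have h2 : ℓA u ≤ (T.filter fun x => c x ≠ 0).sup (fun x => ℓA (m x)) :=
    filt_sum_smul_le hlA T c m
  have h3 : lam z = (T.filter fun x => c x ≠ 0).sup lam := (hmix T hT c).1
  have h4 : (T.filter fun x => c x ≠ 0).sup lam
      = (T.filter fun x => c x ≠ 0).sup (fun x => ℓA (m x)) := rfl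
  have hmain : ℓA u = (T.filter fun x => c x ≠ 0).sup (fun x => ℓA (m x)) := by
    refine le_antisymm h2 ?_
    rw [← h4, ← h3]
    exact h1
  refine ⟨hmain, ?_⟩
  intro w hw
  have hfz : f (u + w) = z := by
    rw [map_add, hfu, LinearMap.mem_ker.1 hw, add_zero]
  have h5 : lam z ≤ ℓA (u + w) := by
    rw [← hfz]
    exact hlam_le (u + w)
  rw [hmain, ← h4, ← h3]
  exact h5

end Core

section Assemble
variable {κ : Type u} [Field κ]

lemma li_of_orth {V : Type v} [AddCommGroup V] [Module κ V]
    (ℓ : V → WithBot ℝ) (hl : IsFiltrationFn κ ℓ) {S : Set V}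
    (horth : IsOrthogonal κ ℓ S)
    {ι : Type*} (G : ι → V) (hG : ∀ i, G i ∈ S) (hinj : Function.Injective G) :
    LinearIndependent κ G := by
  classical
  rw [linearIndependent_iff']
  intro s g hsum i his
  set c : V → κ := fun v => if h : ∃ j ∈ s, G j = v then g h.choose else 0 with hc
  have hcG : ∀ j ∈ s, c (G j) = g j := by
    intro j hj
    have hex : ∃ j' ∈ s, G j' = G j := ⟨j, hj, rfl⟩
    rw [hc]
    simp only
    rw [dif_pos hex]
    exact congrArg g (hinj hex.choose_spec.2)
  have hTsub : ↑(s.image G) ⊆ S := by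
    intro v hv
    rw [Finset.coe_image] at hv
    obtain ⟨j, _, rfl⟩ := hv
    exact hG j
  have hsum2 : ∑ v ∈ s.image G, c v • v = 0 := by
    rw [Finset.sum_image (fun a _ b _ h => hinj h)]
    rw [← hsum]
    exact Finset.sum_congr rfl (fun j hj => by rw [hcG j hj])
  have horth2 := horth.2 (s.image G) hTsub c
  rw [hsum2, filt_zero hl] at horth2
  by_contra hgi
  have hmem : G i ∈ (s.image G).filter fun v => c v ≠ 0 := by
    refine Finset.mem_filter.2 ⟨Finset.mem_image_of_mem G his, ?_⟩
    rw [hcG i his]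
    exact hgi
  have hle := Finset.le_sup (f := ℓ) hmem
  rw [← horth2, le_bot_iff] at hle
  exact horth.1 (((hl.1 _).1 hle) ▸ hG i)

lemma assemble {V : Type v} {W : Type v} [AddCommGroup V] [Module κ V]
    [AddCommGroup W] [Module κ W]
    (ℓV : V → WithBot ℝ) (hlV : IsFiltrationFn κ ℓV)
    (e : V →ₗ[κ] W)
    {ι : Type v} (φ : ι → V) (hφinj : Function.Injective φ)
    (hφ0 : (0 : V) ∉ Set.range φ)
    (hφorth : ∀ T : Finset V, ↑T ⊆ Set.range φ → ∀ c : V → κ,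
      ℓV (∑ v ∈ T, c v • v) = (T.filter fun v => c v ≠ 0).sup ℓV)
    (hφspan : Submodule.span κ (Set.range φ) = LinearMap.ker e)
    (X : Set W) (m : W → V)
    (hX0 : (0 : W) ∉ X)
    (hXspan : Submodule.span κ X = LinearMap.range e)
    (hm : ∀ x ∈ X, e (m x) = x)
    (hlift : ∀ T : Finset W, ↑T ⊆ X → ∀ c : W → κ,
      ℓV (∑ x ∈ T, c x • m x) = (T.filter fun x => c x ≠ 0).sup (fun x => ℓV (m x)) ∧
      ∀ w ∈ LinearMap.ker e, ℓV (∑ x ∈ T, c x • m x) ≤ ℓV (∑ x ∈ T, c x • m x + w)) :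
    LinearIndependent κ (Sum.elim φ (fun j : ↥X => m ↑j)) ∧
    Submodule.span κ (Set.range (Sum.elim φ (fun j : ↥X => m ↑j))) = ⊤ ∧
    IsOrthogonal κ ℓV (Set.range (Sum.elim φ (fun j : ↥X => m ↑j))) := by
  classical
  set F := Sum.elim φ (fun j : ↥X => m ↑j) with hFdef
  have hrφ : Set.range φ ⊆ (LinearMap.ker e : Set V) := by
    intro v hv
    have : v ∈ Submodule.span κ (Set.range φ) := Submodule.subset_span hv
    rwa [hφspan] at this
  have hmx : ∀ x ∈ X, e (m x) = x ∧ x ≠ 0 := by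
    intro x hx
    exact ⟨hm x hx, fun h => hX0 (h ▸ hx)⟩
  -- 0 is not in the range of F
  have h0F : (0 : V) ∉ Set.range F := by
    rintro ⟨(i | j), hij⟩
    · exact hφ0 ⟨i, hij⟩
    · have := hm _ j.2
      rw [hFdef] at hij
      simp only [Sum.elim_inr] at hij
      rw [hij, map_zero] at this
      exact hX0 (this ▸ j.2)
  -- orthogonality of the range of F
  have horthF : ∀ T : Finset V, ↑T ⊆ Set.range F → ∀ c : V → κ,
      ℓV (∑ v ∈ T, c v • v) = (T.filter fun v => c v ≠ 0).sup ℓV := by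
    intro T hT c
    set P : V → Prop := fun v => v ∈ LinearMap.ker e with hPdef
    set T₁ := T.filter P with hT₁def
    set T₂ := T.filter (fun v => ¬ P v) with hT₂def
    have hTcases : ∀ v ∈ T, (v ∈ Set.range φ ∧ P v) ∨ ((m (e v) = v ∧ e v ∈ X) ∧ ¬ P v) := by
      intro v hv
      rcases hT hv with ⟨(i | j), hij⟩
      · left
        refine ⟨⟨i, hij⟩, hrφ ⟨i, hij⟩⟩
      · right
        rw [hFdef] at hij
        simp only [Sum.elim_inr] at hij
        have hev : e v = ↑j := by rw [← hij]; exact hm _ j.2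
        refine ⟨⟨by rw [hev, hij], by rw [hev]; exact j.2⟩, ?_⟩
        rw [hPdef]
        simp only [LinearMap.mem_ker]
        rw [hev]
        exact fun h => hX0 (h ▸ j.2)
    have hT₁φ : ↑T₁ ⊆ Set.range φ := by
      intro v hv
      have hv' := Finset.mem_coe.1 hv
      rcases hTcases v (Finset.mem_of_mem_filter v hv') with h | h
      · exact h.1
      · exact absurd (Finset.mem_filter.1 hv').2 h.2
    have hT₂fix : ∀ v ∈ T₂, m (e v) = v ∧ e v ∈ X := by
      intro v hv
      rcases hTcases v (Finset.mem_of_mem_filter v hv) with h | h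
      · exact absurd h.2 (Finset.mem_filter.1 hv).2
      · exact h.1
    set z := ∑ v ∈ T₁, c v • v with hzdef
    set u := ∑ v ∈ T₂, c v • v with hudef
    have htotal : z + u = ∑ v ∈ T, c v • v := Finset.sum_filter_add_sum_filter_not T P _
    have hzker : z ∈ LinearMap.ker e := by
      refine Submodule.sum_mem _ ?_
      intro v hv
      exact Submodule.smul_mem _ _ (Finset.mem_filter.1 hv).2
    set TW := T₂.image e with hTWdef
    have hTWX : ↑TW ⊆ X := by
      intro x hx
      rw [hTWdef, Finset.coe_image] at hx
      obtain ⟨v, hv, rfl⟩ := hx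
      exact (hT₂fix v hv).2
    have hinj₂ : ∀ a ∈ T₂, ∀ b ∈ T₂, e a = e b → a = b := by
      intro a ha b hb h
      rw [← (hT₂fix a ha).1, ← (hT₂fix b hb).1, h]
    have hsumu : ∑ x ∈ TW, c (m x) • m x = u := by
      rw [hTWdef, Finset.sum_image hinj₂, hudef]
      refine Finset.sum_congr rfl ?_
      intro v hv
      rw [(hT₂fix v hv).1]
    obtain ⟨hu1, hu2⟩ := hlift TW hTWX (fun x => c (m x))
    rw [hsumu] at hu1 hu2
    have hcrit := filt_ptOrth hlV (LinearMap.ker e) u hu2 z hzker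
    have hz := hφorth T₁ hT₁φ c
    have hu : ℓV u = (T₂.filter fun v => c v ≠ 0).sup ℓV := by
      rw [hu1]
      have himg : TW.filter (fun x => c (m x) ≠ 0) = (T₂.filter fun v => c v ≠ 0).image e := by
        ext x
        simp only [Finset.mem_filter, Finset.mem_image, hTWdef]
        constructor
        · rintro ⟨⟨v, hv, rfl⟩, hcx⟩
          refine ⟨v, ⟨hv, ?_⟩, rfl⟩
          rwa [(hT₂fix v hv).1] at hcx
        · rintro ⟨v, ⟨hv, hcv⟩, rfl⟩
          refine ⟨⟨v, hv, rfl⟩, ?_⟩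
          rwa [(hT₂fix v hv).1]
      rw [himg, Finset.sup_image]
      refine Finset.sup_congr rfl ?_
      intro v hv
      have hv₂ : v ∈ T₂ := Finset.mem_of_mem_filter v hv
      show ℓV (m (e v)) = ℓV v
      rw [(hT₂fix v hv₂).1]
    have hfil : T.filter (fun v => c v ≠ 0)
        = (T₁.filter fun v => c v ≠ 0) ∪ (T₂.filter fun v => c v ≠ 0) := by
      rw [hT₁def, hT₂def, Finset.filter_comm, Finset.filter_comm (fun v => ¬ P v),
        Finset.filter_union_filter_not_eq]
    rw [← htotal, hfil, Finset.sup_union, ← hz, ← hu, add_comm z u, hcrit, max_comm]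
  -- linear independence
  have hFinj : Function.Injective F := by
    rintro (i | j) (i' | j') h
    · rw [hFdef] at h
      simp only [Sum.elim_inl] at h
      exact congrArg Sum.inl (hφinj h)
    · exfalso
      rw [hFdef] at h
      simp only [Sum.elim_inl, Sum.elim_inr] at h
      have h1 : e (φ i) = 0 := hrφ ⟨i, rfl⟩
      rw [h, hm _ j'.2] at h1
      exact hX0 (h1 ▸ j'.2)
    · exfalso
      rw [hFdef] at h
      simp only [Sum.elim_inl, Sum.elim_inr] at h
      have h1 : e (φ i') = 0 := hrφ ⟨i', rfl⟩
      rw [← h, hm _ j.2] at h1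
      exact hX0 (h1 ▸ j.2)
    · rw [hFdef] at h
      simp only [Sum.elim_inr] at h
      have h1 : (↑j : W) = ↑j' := by
        rw [← hm _ j.2, ← hm _ j'.2, h]
      exact congrArg Sum.inr (Subtype.ext h1)
  have hIsO : IsOrthogonal κ ℓV (Set.range F) := ⟨h0F, horthF⟩
  refine ⟨li_of_orth ℓV hlV hIsO F (fun i => ⟨i, rfl⟩) hFinj, ?_, hIsO⟩
  -- spanning
  rw [eq_top_iff]
  intro v _
  have hv1 : e v ∈ LinearMap.range e := ⟨v, rfl⟩
  rw [← hXspan] at hv1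
  obtain ⟨cc, hcsup, hcsum⟩ := Submodule.mem_span_set.1 hv1
  set uu := ∑ x ∈ cc.support, cc x • m x with huu
  have heu : e uu = e v := by
    rw [huu, map_sum, ← hcsum, Finsupp.sum]
    refine Finset.sum_congr rfl ?_
    intro x hx
    rw [map_smul, hm x (hcsup hx)]
  have hvu : v - uu ∈ LinearMap.ker e := by
    rw [LinearMap.mem_ker, map_sub, heu, sub_self]
  rw [← hφspan] at hvu
  have hsub1 : Submodule.span κ (Set.range φ) ≤ Submodule.span κ (Set.range F) := by
    refine Submodule.span_mono ?_
    rintro w ⟨i, rfl⟩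
    exact ⟨Sum.inl i, rfl⟩
  have humem : uu ∈ Submodule.span κ (Set.range F) := by
    refine Submodule.sum_mem _ ?_
    intro x hx
    refine Submodule.smul_mem _ _ (Submodule.subset_span ?_)
    exact ⟨Sum.inr ⟨x, hcsup hx⟩, rfl⟩
  have hsplit : v = (v - uu) + uu := by abel
  rw [hsplit]
  exact Submodule.add_mem _ (hsub1 hvu) humem

end Assemble

/-- For an acyclic ascending chain complex `(A, ∂, ℓ)`, each degree satisfying the best
approximation property, there are families `y^k : 𝓘_k → A_k` so that for each `k` the
family `{∂ y^{k+1}_i} ∪ {y^k_j}` is an `ℓ_k`-orthogonal basis of `A_k`. -/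
theorem exists_orthogonal_basis_adapted_to_differential (κ : Type u) [Field κ]
    {A : ℤ → Type v} [∀ k, AddCommGroup (A k)] [∀ k, Module κ (A k)]
    (d : ∀ k : ℤ, A k →ₗ[κ] A (k - 1)) (ℓ : ∀ k : ℤ, A k → WithBot ℝ)
    (hA : IsAscendingComplex κ d ℓ) (hba : ∀ k : ℤ, HasBestApprox κ (ℓ k))
    (hacyclic : ∀ k : ℤ, LinearMap.ker (d k) = LinearMap.range (bdryMap κ d k)) :
    ∃ (I : ℤ → Type v) (y : ∀ k : ℤ, I k → A k),
      ∀ k : ℤ,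
        LinearIndependent κ
          (Sum.elim (fun i : I (k + 1) => bdryMap κ d k (y (k + 1) i)) (y k)) ∧
        Submodule.span κ
          (Set.range (Sum.elim (fun i : I (k + 1) => bdryMap κ d k (y (k + 1) i)) (y k))) = ⊤ ∧
        IsOrthogonal κ (ℓ k)
          (Set.range (Sum.elim (fun i : I (k + 1) => bdryMap κ d k (y (k + 1) i)) (y k))) := by
  classical
  choose X m h1 h2 h3 h4 h5 h6 using fun k : ℤ =>
    one_degree (d k) (ℓ k) (ℓ (k - 1)) (hA.2.1 k) (hA.2.1 (k - 1)) (hba k) (hba (k - 1))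
  -- transport lemmas
  have cast_inj : ∀ (j k : ℤ) (h : j = k) (a b : A j), castL κ h a = castL κ h b → a = b := by
    intro j k h a b hab
    subst h
    exact hab
  have cast_img : ∀ (j k : ℤ) (h : j = k) (S : Set (A j)),
      Set.range (fun i : ↥S => castL κ (C := A) h ↑i) = (castL κ (C := A) h) '' S := by
    intro j k h S
    ext v
    simp only [Set.mem_range, Set.mem_image, Subtype.exists, exists_prop]
  have cast_orth : ∀ (j k : ℤ) (h : j = k) (S : Set (A j)),
      (∀ T : Finset (A j), ↑T ⊆ S → ∀ c : A j → κ,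
        ℓ j (∑ v ∈ T, c v • v) = (T.filter fun v => c v ≠ 0).sup (ℓ j)) →
      (∀ T : Finset (A k), ↑T ⊆ (castL κ (C := A) h) '' S → ∀ c : A k → κ,
        ℓ k (∑ v ∈ T, c v • v) = (T.filter fun v => c v ≠ 0).sup (ℓ k)) := by
    intro j k h S hS
    subst h
    intro T hT c
    have himg : (castL κ (C := A) (rfl : j = j)) '' S = S := by
      ext v
      constructor
      · rintro ⟨w, hw, rfl⟩
        exact hw
      · intro hv
        exact ⟨v, hv, rfl⟩
    rw [himg] at hT
    exact hS T hT c
  refine ⟨fun k => ↥(X k), fun k i => m k ↑i, ?_⟩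
  intro k
  have hh : k + 1 - 1 = k := by omega
  set φ : ↥(X (k + 1)) → A k := fun i => castL κ (C := A) hh ↑i with hφdef
  have hfam : (fun i : ↥(X (k + 1)) => bdryMap κ d k (m (k + 1) ↑i)) = φ := by
    funext i
    show castL κ (show k + 1 - 1 = k by omega) (d (k + 1) (m (k + 1) ↑i)) = φ i
    rw [h4 (k + 1) ↑i i.2]
  have hφinj : Function.Injective φ := by
    intro a b hab
    exact Subtype.ext (cast_inj _ _ hh _ _ hab)
  have hφ0 : (0 : A k) ∉ Set.range φ := by
    rintro ⟨i, hi⟩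
    have h0 : castL κ (C := A) hh (↑i) = castL κ (C := A) hh 0 := by
      rw [map_zero]
      exact hi
    exact h2 (k + 1) ((cast_inj _ _ hh _ _ h0) ▸ i.2)
  have hφrange : Set.range φ = (castL κ (C := A) hh) '' (X (k + 1)) := cast_img _ _ hh _
  have hφorth : ∀ T : Finset (A k), ↑T ⊆ Set.range φ → ∀ c : A k → κ,
      ℓ k (∑ v ∈ T, c v • v) = (T.filter fun v => c v ≠ 0).sup (ℓ k) := by
    rw [hφrange]
    exact cast_orth _ _ hh (X (k + 1)) (h5 (k + 1))
  have hφspan : Submodule.span κ (Set.range φ) = LinearMap.ker (d k) := by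
    rw [hφrange, Submodule.span_image, h3 (k + 1), ← LinearMap.range_comp]
    rw [hacyclic k]
    rfl
  have := assemble (κ := κ) (ℓ k) (hA.2.1 k) (d k) φ hφinj hφ0 hφorth hφspan
    (X k) (m k) (h2 k) (h3 k) (h4 k) (h6 k)
  rw [hfam]
  exact this
end

section
/- Let (X, ℓ) and (Y, ℓ′) be filtered vector spaces over a field κ such that ℓ(X ∖ {0}) and ℓ′(Y ∖ {0}) are both well-ordered subsets of ℝ, and let φ : X → Y be a κ-linear isomorphism. Then there is an ℓ-orthogonal basis {v_α} of X such that {φ(v_α)} is an ℓ′-orthogonal basis of Y. -/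
open scoped Classical

universe u v

section Aux

variable {κ : Type u} [Field κ] {X : Type v} [AddCommGroup X] [Module κ X]
variable {ℓ m : X → WithBot ℝ}

lemma filt_zero_s9 (h : IsFiltrationFun κ ℓ) : ℓ 0 = ⊥ := (h.1 0).2 rfl

lemma filt_smul_le (h : IsFiltrationFun κ ℓ) (c : κ) (x : X) : ℓ (c • x) ≤ ℓ x := by
  by_cases hc : c = 0
  · simp [hc, filt_zero_s9 h]
  · rw [h.2.1 c x hc]

lemma filt_neg_s9 (h : IsFiltrationFun κ ℓ) (x : X) : ℓ (-x) = ℓ x := by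
  have := h.2.1 (-1 : κ) x (by norm_num)
  simpa using this

lemma filt_add_eq (h : IsFiltrationFun κ ℓ) {a b : X} (hab : ℓ b < ℓ a) : ℓ (a + b) = ℓ a := by
  have h1 : ℓ (a + b) ≤ ℓ a := (h.2.2 a b).trans (max_le le_rfl hab.le)
  refine le_antisymm h1 ?_
  have h2 : ℓ a ≤ max (ℓ (a + b)) (ℓ (-b)) := by
    have := h.2.2 (a + b) (-b); simpa using this
  rw [filt_neg_s9 h] at h2
  rcases max_cases (ℓ (a + b)) (ℓ b) with ⟨he, _⟩ | ⟨he, _⟩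
  · rw [he] at h2; exact h2
  · rw [he] at h2; exact absurd h2 hab.not_ge

lemma filt_sum_le_s9 (h : IsFiltrationFun κ ℓ) {ι : Type*} (T : Finset ι) (f : ι → X) :
    ℓ (∑ i ∈ T, f i) ≤ T.sup fun i => ℓ (f i) := by
  classical
  induction T using Finset.induction_on with
  | empty => simp [filt_zero_s9 h]
  | @insert a s ha ih =>
    rw [Finset.sum_insert ha, Finset.sup_insert]
    exact (h.2.2 _ _).trans (max_le_max le_rfl ih)

/-- The sublevel submodule `{x | ℓ x ≤ t}`. -/
def levSub (h : IsFiltrationFun κ ℓ) (t : WithBot ℝ) : Submodule κ X where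
  carrier := {x | ℓ x ≤ t}
  zero_mem' := by simp only [Set.mem_setOf_eq, filt_zero_s9 h]; exact bot_le
  add_mem' := by intro a b ha hb; exact (h.2.2 a b).trans (max_le ha hb)
  smul_mem' := by intro c x hx; exact (filt_smul_le h c x).trans hx

/-- The strict sublevel submodule `{x | ℓ x < t}`. -/
def slevSub (h : IsFiltrationFun κ ℓ) (t : ℝ) : Submodule κ X where
  carrier := {x | ℓ x < (t : WithBot ℝ)}
  zero_mem' := by simp only [Set.mem_setOf_eq, filt_zero_s9 h]; exact WithBot.bot_lt_coe t
  add_mem' := by intro a b ha hb; exact (h.2.2 a b).trans_lt (max_lt ha hb)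
  smul_mem' := by intro c x hx; exact (filt_smul_le h c x).trans_lt hx

lemma mem_levSub {h : IsFiltrationFun κ ℓ} {t : WithBot ℝ} {x : X} :
    x ∈ levSub h t ↔ ℓ x ≤ t := Iff.rfl

lemma mem_slevSub {h : IsFiltrationFun κ ℓ} {t : ℝ} {x : X} :
    x ∈ slevSub h t ↔ ℓ x < (t : WithBot ℝ) := Iff.rfl

/-- The bi-sublevel submodule. -/
def ASub (hℓ : IsFiltrationFun κ ℓ) (hm : IsFiltrationFun κ m) (t s : ℝ) : Submodule κ X :=
  levSub hℓ ↑t ⊓ levSub hm ↑s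

/-- The "boundary" submodule in the bi-graded piece construction. -/
def BSub (hℓ : IsFiltrationFun κ ℓ) (hm : IsFiltrationFun κ m) (t s : ℝ) : Submodule κ X :=
  (slevSub hℓ t ⊓ levSub hm ↑s) ⊔ (levSub hℓ ↑t ⊓ slevSub hm s)

lemma BSub_le_ASub (hℓ : IsFiltrationFun κ ℓ) (hm : IsFiltrationFun κ m) (t s : ℝ) :
    BSub hℓ hm t s ≤ ASub hℓ hm t s := by
  refine sup_le ?_ ?_
  · rintro x ⟨h1, h2⟩
    exact Submodule.mem_inf.2 ⟨le_of_lt (mem_slevSub.1 h1), h2⟩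
  · rintro x ⟨h1, h2⟩
    exact Submodule.mem_inf.2 ⟨h1, le_of_lt (mem_slevSub.1 h2)⟩

lemma BSub_comm (hℓ : IsFiltrationFun κ ℓ) (hm : IsFiltrationFun κ m) (t s : ℝ) :
    BSub hm hℓ s t = BSub hℓ hm t s := by
  unfold BSub
  rw [sup_comm]
  congr 1 <;> rw [inf_comm]

/-- Choice of a linearly independent set spanning a complement of `B` in `A`. -/
lemma exists_compl_basis (B A : Submodule κ X) (hBA : B ≤ A) :
    ∃ s : Set X, s ⊆ (A : Set X) ∧ Disjoint (Submodule.span κ s) B ∧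
      Submodule.span κ s ⊔ B = A ∧ LinearIndependent κ (fun v : s => (v : X)) := by
  obtain ⟨C', hC⟩ := Submodule.exists_isCompl (B.comap A.subtype)
  let f : ↥C' →ₗ[κ] X := A.subtype.comp C'.subtype
  have hfinj : Function.Injective f := by
    intro a b hab
    exact Subtype.ext (Subtype.ext hab)
  let b := Module.Basis.ofVectorSpace κ ↥C'
  refine ⟨Set.range (⇑f ∘ ⇑b), ?_, ?_, ?_, ?_⟩
  · rintro x ⟨i, rfl⟩
    exact ((b i : ↥A)).2
  · have hspan : Submodule.span κ (Set.range (⇑f ∘ ⇑b)) = LinearMap.range f := by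
      rw [Set.range_comp, Submodule.span_image, b.span_eq, Submodule.map_top]
    rw [hspan]
    rw [Submodule.disjoint_def]
    rintro x ⟨⟨⟨x', hxA⟩, hxC⟩, rfl⟩ hxB
    have : (⟨x', hxA⟩ : ↥A) ∈ B.comap A.subtype ⊓ C' := ⟨hxB, hxC⟩
    rw [hC.inf_eq_bot] at this
    simp only [Submodule.mem_bot] at this
    simp [f, this]
  · have hspan : Submodule.span κ (Set.range (⇑f ∘ ⇑b)) = LinearMap.range f := by
      rw [Set.range_comp, Submodule.span_image, b.span_eq, Submodule.map_top]
    rw [hspan]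
    have : LinearMap.range f = Submodule.map A.subtype C' := by
      rw [LinearMap.range_comp, Submodule.range_subtype]
    rw [this]
    have h2 : Submodule.map A.subtype C' ⊔ B
        = Submodule.map A.subtype (C' ⊔ B.comap A.subtype) := by
      rw [Submodule.map_sup, Submodule.map_comap_subtype, inf_eq_right.2 hBA]
    rw [h2, sup_comm C' (B.comap A.subtype), hC.sup_eq_top, Submodule.map_subtype_top]
  · have hli : LinearIndependent κ (⇑f ∘ ⇑b) :=
      b.linearIndependent.map' f (LinearMap.ker_eq_bot.2 hfinj)
    exact LinearIndependent.linearIndepOn_id hli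

/-- From a linearly independent set, finite combinations vanish only trivially. -/
lemma li_set_finset {S : Set X} (hli : LinearIndependent κ (fun v : S => (v : X)))
    (T : Finset X) (hT : (T : Set X) ⊆ S) (c : X → κ)
    (hsum : ∑ v ∈ T, c v • v = 0) : ∀ v ∈ T, c v = 0 := by
  classical
  have key : ∀ (T' : Finset ↥S) (g : ↥S → κ), ∑ i ∈ T', g i • (i : X) = 0 →
      ∀ i ∈ T', g i = 0 := linearIndependent_iff'.1 hli
  let emb : {x // x ∈ T} ↪ ↥S := ⟨fun x => ⟨(x : X), hT x.2⟩, by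
    intro a b hab
    simp only [Subtype.mk.injEq] at hab
    exact Subtype.ext hab⟩
  intro v hv
  have h1 : ∑ i ∈ T.attach.map emb, c (i : X) • (i : X) = 0 := by
    rw [Finset.sum_map]
    exact (Finset.sum_attach T (fun x => c x • x)).trans hsum
  have := key (T.attach.map emb) (fun i => c (i : X)) h1 ⟨v, hT hv⟩
    (Finset.mem_map.2 ⟨⟨v, hv⟩, Finset.mem_attach _ _, rfl⟩)
  exact this

/-- Orthogonality implies linear independence. -/
lemma orth_linearIndependent {V : Type v} [AddCommGroup V] [Module κ V]
    {ℓ : V → WithBot ℝ} (S : Set V) (h : IsOrthogonal κ ℓ S)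
    (hf : IsFiltrationFun κ ℓ) :
    LinearIndependent κ (fun x : S => (x : V)) := by
  classical
  rw [linearIndependent_iff']
  intro s g hsum i hi
  by_contra hgi
  set T : Finset V := s.image (fun j : ↥S => (j : V)) with hTdef
  have hinj : Set.InjOn (fun j : ↥S => (j : V)) ↑s := fun a _ b _ hab => Subtype.ext hab
  set c : V → κ := fun x => if hx : x ∈ S then g ⟨x, hx⟩ else 0 with hcdef
  have hcoe : ∀ j : ↥S, c (j : V) = g j := by
    intro j
    simp only [hcdef, dif_pos j.2]
  have hTS : (T : Set V) ⊆ S := by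
    intro x hx
    obtain ⟨j, _, rfl⟩ := Finset.mem_image.1 hx
    exact j.2
  have hsum2 : ∑ v ∈ T, c v • v = 0 := by
    rw [hTdef, Finset.sum_image (fun a ha b hb hab => hinj ha hb hab)]
    simpa only [hcoe] using hsum
  have := h.2 T hTS c
  rw [hsum2, filt_zero_s9 hf] at this
  have hmem : (i : V) ∈ T.filter fun v => c v ≠ 0 := by
    refine Finset.mem_filter.2 ⟨Finset.mem_image.2 ⟨i, hi, rfl⟩, ?_⟩
    rw [hcoe i]; exact hgi
  have hle : ℓ (i : V) ≤ (T.filter fun v => c v ≠ 0).sup ℓ := Finset.le_sup hmem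
  rw [← this] at hle
  have : ℓ (i : V) = ⊥ := le_bot_iff.1 hle
  exact h.1 (((hf.1 _).1 this) ▸ i.2)

/-- The key orthogonality criterion. -/
lemma orth_of (hℓ : IsFiltrationFun κ ℓ) (hm : IsFiltrationFun κ m) (S : Set X)
    (h0 : (0 : X) ∉ S)
    (hval : ∀ v ∈ S, ∃ t s : ℝ, ℓ v = (t : WithBot ℝ) ∧ m v = (s : WithBot ℝ))
    (hind : ∀ (t s : ℝ) (T : Finset X), (T : Set X) ⊆ S →
      (∀ v ∈ T, ℓ v = (t : WithBot ℝ) ∧ m v = (s : WithBot ℝ)) →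
      ∀ c : X → κ, (∃ v ∈ T, c v ≠ 0) → (∑ v ∈ T, c v • v) ∉ BSub hℓ hm t s) :
    IsOrthogonal κ ℓ S := by
  refine ⟨h0, ?_⟩
  intro T hTS c
  classical
  set T' := T.filter (fun v => c v ≠ 0) with hT'def
  have hT'S : (T' : Set X) ⊆ S := fun x hx => hTS (Finset.filter_subset _ _ hx)
  have hsame : ∑ v ∈ T.filter (fun v => c v ≠ 0), c v • v = ∑ v ∈ T, c v • v := by
    apply Finset.sum_filter_of_ne
    intro v _ hne hc
    exact hne (by rw [hc, zero_smul])
  rw [← hsame, ← hT'def]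
  rcases Finset.eq_empty_or_nonempty T' with he | hne
  · rw [he]; simp [filt_zero_s9 hℓ]
  obtain ⟨v₀, hv₀T, hv₀⟩ := Finset.exists_mem_eq_sup T' hne ℓ
  have hv₀S : v₀ ∈ S := hT'S hv₀T
  obtain ⟨t, s₀, htv, _⟩ := hval v₀ hv₀S
  -- Top = elements of maximal ℓ-value t
  set Top := T'.filter (fun v => ℓ v = (t : WithBot ℝ)) with hTopdef
  have hv₀Top : v₀ ∈ Top := Finset.mem_filter.2 ⟨hv₀T, htv⟩
  obtain ⟨v₁, hv₁Top, hv₁⟩ := Finset.exists_mem_eq_sup Top ⟨v₀, hv₀Top⟩ m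
  have hv₁T' : v₁ ∈ T' := (Finset.mem_filter.1 hv₁Top).1
  obtain ⟨t₁, s, _, hsv⟩ := hval v₁ (hT'S hv₁T')
  have hTopm : ∀ v ∈ Top, m v ≤ (s : WithBot ℝ) := by
    intro v hv
    calc m v ≤ Top.sup m := Finset.le_sup hv
    _ = m v₁ := hv₁
    _ = (s : WithBot ℝ) := hsv
  have hcne : ∀ v ∈ T', c v ≠ 0 := fun v hv => (Finset.mem_filter.1 hv).2
  -- Step A : the sum over Top has ℓ-value exactly t
  have hTopsum : ℓ (∑ v ∈ Top, c v • v) = (t : WithBot ℝ) := by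
    have hub : ℓ (∑ v ∈ Top, c v • v) ≤ (t : WithBot ℝ) := by
      refine (filt_sum_le_s9 hℓ Top _).trans (Finset.sup_le fun v hv => ?_)
      exact (filt_smul_le hℓ (c v) v).trans (le_of_eq (Finset.mem_filter.1 hv).2)
    rcases eq_or_lt_of_le hub with heq | hlt
    · exact heq
    exfalso
    set E := Top.filter (fun v => m v = (s : WithBot ℝ)) with hEdef
    have hv₁E : v₁ ∈ E := Finset.mem_filter.2 ⟨hv₁Top, hsv⟩
    have hsplit : ∑ v ∈ E, c v • v + ∑ v ∈ Top.filter (fun v => ¬ m v = (s : WithBot ℝ)),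
        c v • v = ∑ v ∈ Top, c v • v :=
      Finset.sum_filter_add_sum_filter_not Top _ _
    have hx₀B : (∑ v ∈ Top, c v • v) ∈ BSub hℓ hm t s := by
      refine Submodule.mem_sup_left (Submodule.mem_inf.2 ⟨hlt, ?_⟩)
      refine (filt_sum_le_s9 hm Top _).trans (Finset.sup_le fun v hv => ?_)
      exact (filt_smul_le hm (c v) v).trans (hTopm v hv)
    have hx₂B : (∑ v ∈ Top.filter (fun v => ¬ m v = (s : WithBot ℝ)), c v • v)
        ∈ BSub hℓ hm t s := by
      refine Submodule.mem_sup_right (Submodule.sum_mem _ fun v hv => ?_)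
      obtain ⟨hvTop, hvne⟩ := Finset.mem_filter.1 hv
      refine Submodule.mem_inf.2 ⟨?_, ?_⟩
      · exact (filt_smul_le hℓ (c v) v).trans (le_of_eq (Finset.mem_filter.1 hvTop).2)
      · exact (filt_smul_le hm (c v) v).trans_lt (lt_of_le_of_ne (hTopm v hvTop) hvne)
    have hx₁B : (∑ v ∈ E, c v • v) ∈ BSub hℓ hm t s := by
      have : (∑ v ∈ E, c v • v) = (∑ v ∈ Top, c v • v) -
          ∑ v ∈ Top.filter (fun v => ¬ m v = (s : WithBot ℝ)), c v • v := by
        rw [← hsplit, add_sub_cancel_right]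
      rw [this]
      exact Submodule.sub_mem _ hx₀B hx₂B
    refine hind t s E ?_ ?_ c ⟨v₁, hv₁E, hcne v₁ hv₁T'⟩ hx₁B
    · intro x hx
      exact hT'S (Finset.mem_filter.1 ((Finset.mem_filter.1 hx).1)).1
    · intro v hv
      obtain ⟨hvTop, hvm⟩ := Finset.mem_filter.1 hv
      exact ⟨(Finset.mem_filter.1 hvTop).2, hvm⟩
  -- Step B : the remaining terms are strictly smaller
  have hsplit2 : ∑ v ∈ Top, c v • v + ∑ v ∈ T'.filter (fun v => ¬ ℓ v = (t : WithBot ℝ)),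
      c v • v = ∑ v ∈ T', c v • v := by
    rw [hTopdef]
    exact Finset.sum_filter_add_sum_filter_not T' _ _
  have hrest : ℓ (∑ v ∈ T'.filter (fun v => ¬ ℓ v = (t : WithBot ℝ)), c v • v)
      < (t : WithBot ℝ) := by
    refine (filt_sum_le_s9 hℓ _ _).trans_lt ?_
    refine (Finset.sup_lt_iff (WithBot.bot_lt_coe t)).2 fun v hv => ?_
    obtain ⟨hvT', hvne⟩ := Finset.mem_filter.1 hv
    have hvle : ℓ v ≤ (t : WithBot ℝ) := by
      calc ℓ v ≤ T'.sup ℓ := Finset.le_sup hvT'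
      _ = ℓ v₀ := hv₀
      _ = (t : WithBot ℝ) := htv
    exact (filt_smul_le hℓ (c v) v).trans_lt (lt_of_le_of_ne hvle hvne)
  have hfinal : ℓ (∑ v ∈ T', c v • v) = (t : WithBot ℝ) := by
    rw [← hsplit2, filt_add_eq hℓ (hTopsum ▸ hrest), hTopsum]
  rw [hfinal, hv₀, htv]

/-- The spanning criterion via well-ordered value sets. -/
lemma span_of (hℓ : IsFiltrationFun κ ℓ) (hm : IsFiltrationFun κ m)
    (hwℓ : WellOrderedSubset {t : ℝ | ∃ v : X, v ≠ 0 ∧ ℓ v = (t : WithBot ℝ)})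
    (hwm : WellOrderedSubset {t : ℝ | ∃ v : X, v ≠ 0 ∧ m v = (t : WithBot ℝ)})
    (S : Set X)
    (hsp : ∀ t s : ℝ, ASub hℓ hm t s ≤ Submodule.span κ S ⊔ BSub hℓ hm t s) :
    Submodule.span κ S = ⊤ := by
  by_contra hne
  rw [Submodule.eq_top_iff'] at hne
  push_neg at hne
  obtain ⟨x₀, hx₀⟩ := hne
  have hne0 : ∀ x : X, x ∉ Submodule.span κ S → x ≠ 0 := by
    rintro x hx rfl
    exact hx (Submodule.zero_mem _)
  have hval : ∀ x : X, x ≠ 0 → ∃ t : ℝ, ℓ x = (t : WithBot ℝ) := by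
    intro x hx
    have : ℓ x ≠ ⊥ := fun h => hx ((hℓ.1 x).1 h)
    obtain ⟨a, ha⟩ := WithBot.ne_bot_iff_exists.1 this
    exact ⟨a, ha.symm⟩
  have hvalm : ∀ x : X, x ≠ 0 → ∃ s : ℝ, m x = (s : WithBot ℝ) := by
    intro x hx
    have : m x ≠ ⊥ := fun h => hx ((hm.1 x).1 h)
    obtain ⟨a, ha⟩ := WithBot.ne_bot_iff_exists.1 this
    exact ⟨a, ha.symm⟩
  set Tb : Set ℝ := {t : ℝ | ∃ x : X, x ∉ Submodule.span κ S ∧ ℓ x = (t : WithBot ℝ)}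
    with hTbdef
  have hTbsub : Tb ⊆ {t : ℝ | ∃ v : X, v ≠ 0 ∧ ℓ v = (t : WithBot ℝ)} := by
    rintro t ⟨x, hx, hxt⟩
    exact ⟨x, hne0 x hx, hxt⟩
  have hTbne : Tb.Nonempty := by
    obtain ⟨t, ht⟩ := hval x₀ (hne0 x₀ hx₀)
    exact ⟨t, x₀, hx₀, ht⟩
  obtain ⟨t₀, ⟨x₁, hx₁, hx₁t⟩, ht₀min⟩ := hwℓ Tb hTbsub hTbne
  set Sb : Set ℝ := {s : ℝ | ∃ x : X, x ∉ Submodule.span κ S ∧ ℓ x = (t₀ : WithBot ℝ)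
    ∧ m x = (s : WithBot ℝ)} with hSbdef
  have hSbsub : Sb ⊆ {t : ℝ | ∃ v : X, v ≠ 0 ∧ m v = (t : WithBot ℝ)} := by
    rintro s ⟨x, hx, _, hxs⟩
    exact ⟨x, hne0 x hx, hxs⟩
  have hSbne : Sb.Nonempty := by
    obtain ⟨s, hs⟩ := hvalm x₁ (hne0 x₁ hx₁)
    exact ⟨s, x₁, hx₁, hx₁t, hs⟩
  obtain ⟨s₀, ⟨x₂, hx₂, hx₂t, hx₂s⟩, hs₀min⟩ := hwm Sb hSbsub hSbne
  have hx₂A : x₂ ∈ ASub hℓ hm t₀ s₀ := ⟨le_of_eq hx₂t, le_of_eq hx₂s⟩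
  obtain ⟨u, hu, w, hw, huw⟩ := Submodule.mem_sup.1 (hsp t₀ s₀ hx₂A)
  obtain ⟨y, hy, z, hz, hyz⟩ := Submodule.mem_sup.1 hw
  -- one of y, z is not in the span
  have hyz_not : y ∉ Submodule.span κ S ∨ z ∉ Submodule.span κ S := by
    by_contra hc
    push_neg at hc
    exact hx₂ (huw ▸ Submodule.add_mem _ hu (hyz ▸ Submodule.add_mem _ hc.1 hc.2))
  rcases hyz_not with hy' | hz'
  · obtain ⟨t', ht'⟩ := hval y (hne0 y hy')
    have ht'lt : (t' : WithBot ℝ) < (t₀ : WithBot ℝ) := ht' ▸ hy.1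
    have : t₀ ≤ t' := ht₀min t' ⟨y, hy', ht'⟩
    exact absurd (WithBot.coe_lt_coe.1 ht'lt) (not_lt.2 this)
  · obtain ⟨t'', ht''⟩ := hval z (hne0 z hz')
    have ht''le : (t'' : WithBot ℝ) ≤ (t₀ : WithBot ℝ) := ht'' ▸ hz.1
    have ht''ge : t₀ ≤ t'' := ht₀min t'' ⟨z, hz', ht''⟩
    have ht''eq : t'' = t₀ := le_antisymm (WithBot.coe_le_coe.1 ht''le) ht''ge
    obtain ⟨s'', hs''⟩ := hvalm z (hne0 z hz')
    have hs''lt : (s'' : WithBot ℝ) < (s₀ : WithBot ℝ) := hs'' ▸ hz.2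
    have : s₀ ≤ s'' := hs₀min s'' ⟨z, hz', ht''eq ▸ ht'', hs''⟩
    exact absurd (WithBot.coe_lt_coe.1 hs''lt) (not_lt.2 this)

/-- The main simultaneous orthogonalization theorem, for two filtrations on one space. -/
theorem exists_common (hℓ : IsFiltrationFun κ ℓ) (hm : IsFiltrationFun κ m)
    (hwℓ : WellOrderedSubset {t : ℝ | ∃ v : X, v ≠ 0 ∧ ℓ v = (t : WithBot ℝ)})
    (hwm : WellOrderedSubset {t : ℝ | ∃ v : X, v ≠ 0 ∧ m v = (t : WithBot ℝ)}) :
    ∃ S : Set X, IsOrthogonal κ ℓ S ∧ IsOrthogonal κ m S ∧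
      LinearIndependent κ (fun x : S => (x : X)) ∧ Submodule.span κ S = ⊤ := by
  classical
  choose sts hsub hdisj hsup hli using fun (ts : ℝ × ℝ) =>
    exists_compl_basis (BSub hℓ hm ts.1 ts.2) (ASub hℓ hm ts.1 ts.2)
      (BSub_le_ASub hℓ hm ts.1 ts.2)
  set S : Set X := ⋃ (ts : ℝ × ℝ), sts ts with hSdef
  have hsts_sub_S : ∀ ts : ℝ × ℝ, sts ts ⊆ S := fun ts => Set.subset_iUnion sts ts
  -- basic properties of each piece
  have hne0 : ∀ ts : ℝ × ℝ, ∀ v ∈ sts ts, v ≠ 0 := by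
    intro ts v hv
    exact (hli ts).ne_zero ⟨v, hv⟩
  have hnotB : ∀ ts : ℝ × ℝ, ∀ v ∈ sts ts, v ∉ BSub hℓ hm ts.1 ts.2 := by
    intro ts v hv hvB
    exact hne0 ts v hv (Submodule.disjoint_def.1 (hdisj ts) v
      (Submodule.subset_span hv) hvB)
  have hkey : ∀ ts : ℝ × ℝ, ∀ v ∈ sts ts,
      ℓ v = (ts.1 : WithBot ℝ) ∧ m v = (ts.2 : WithBot ℝ) := by
    intro ts v hv
    have hvA : v ∈ ASub hℓ hm ts.1 ts.2 := hsub ts hv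
    constructor
    · refine le_antisymm hvA.1 (not_lt.1 fun hlt => ?_)
      exact hnotB ts v hv (Submodule.mem_sup_left (Submodule.mem_inf.2 ⟨hlt, hvA.2⟩))
    · refine le_antisymm hvA.2 (not_lt.1 fun hlt => ?_)
      exact hnotB ts v hv (Submodule.mem_sup_right (Submodule.mem_inf.2 ⟨hvA.1, hlt⟩))
  have h0 : (0 : X) ∉ S := by
    rintro h
    obtain ⟨ts, hts⟩ := Set.mem_iUnion.1 h
    exact hne0 ts 0 hts rfl
  have hval : ∀ v ∈ S, ∃ t s : ℝ, ℓ v = (t : WithBot ℝ) ∧ m v = (s : WithBot ℝ) := by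
    intro v hv
    obtain ⟨ts, hts⟩ := Set.mem_iUnion.1 hv
    exact ⟨ts.1, ts.2, hkey ts v hts⟩
  have hind : ∀ (t s : ℝ) (T : Finset X), (T : Set X) ⊆ S →
      (∀ v ∈ T, ℓ v = (t : WithBot ℝ) ∧ m v = (s : WithBot ℝ)) →
      ∀ c : X → κ, (∃ v ∈ T, c v ≠ 0) → (∑ v ∈ T, c v • v) ∉ BSub hℓ hm t s := by
    intro t s T hTS hTval c hex hB
    have hTsts : (T : Set X) ⊆ sts (t, s) := by
      intro x hx
      obtain ⟨ts, hts⟩ := Set.mem_iUnion.1 (hTS hx)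
      have h1 := hkey ts x hts
      have h2 := hTval x hx
      have ht : ts.1 = t := WithBot.coe_injective (h1.1.symm.trans h2.1)
      have hs : ts.2 = s := WithBot.coe_injective (h1.2.symm.trans h2.2)
      have : ts = (t, s) := Prod.ext ht hs
      exact this ▸ hts
    have hspan : (∑ v ∈ T, c v • v) ∈ Submodule.span κ (sts (t, s)) :=
      Submodule.sum_mem _ fun v hv =>
        Submodule.smul_mem _ _ (Submodule.subset_span (hTsts hv))
    have hzero : (∑ v ∈ T, c v • v) = 0 :=
      Submodule.disjoint_def.1 (hdisj (t, s)) _ hspan hB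
    obtain ⟨v, hvT, hvc⟩ := hex
    exact hvc (li_set_finset (hli (t, s)) T hTsts c hzero v hvT)
  have hindm : ∀ (s t : ℝ) (T : Finset X), (T : Set X) ⊆ S →
      (∀ v ∈ T, m v = (s : WithBot ℝ) ∧ ℓ v = (t : WithBot ℝ)) →
      ∀ c : X → κ, (∃ v ∈ T, c v ≠ 0) → (∑ v ∈ T, c v • v) ∉ BSub hm hℓ s t := by
    intro s t T hTS hTval c hex
    rw [BSub_comm hℓ hm t s]
    exact hind t s T hTS (fun v hv => ⟨(hTval v hv).2, (hTval v hv).1⟩) c hex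
  have horthℓ : IsOrthogonal κ ℓ S := orth_of hℓ hm S h0 hval hind
  have horthm : IsOrthogonal κ m S := by
    refine orth_of hm hℓ S h0 ?_ hindm
    intro v hv
    obtain ⟨t, s, h1, h2⟩ := hval v hv
    exact ⟨s, t, h2, h1⟩
  refine ⟨S, horthℓ, horthm, orth_linearIndependent S horthℓ hℓ, ?_⟩
  refine span_of hℓ hm hwℓ hwm S fun t s => ?_
  calc ASub hℓ hm t s = Submodule.span κ (sts (t, s)) ⊔ BSub hℓ hm t s := (hsup (t, s)).symm
  _ ≤ Submodule.span κ S ⊔ BSub hℓ hm t s :=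
      sup_le_sup_right (Submodule.span_mono (hsts_sub_S (t, s))) _

/-- Transporting orthogonality through a linear equivalence. -/
lemma orth_image {Y : Type v} [AddCommGroup Y] [Module κ Y]
    (φ : X ≃ₗ[κ] Y) (ℓ' : Y → WithBot ℝ) (S : Set X)
    (h : IsOrthogonal κ (fun x => ℓ' (φ x)) S) :
    IsOrthogonal κ ℓ' (⇑φ '' S) := by
  classical
  constructor
  · rintro ⟨x, hx, hx0⟩
    have : x = 0 := φ.map_eq_zero_iff.1 hx0
    exact h.1 (this ▸ hx)
  · intro T hT c
    set T₀ : Finset X := T.image (⇑φ.symm) with hT₀def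
    have hTT : T = T₀.image (⇑φ) := by
      rw [hT₀def, Finset.image_image]
      have : (⇑φ ∘ ⇑φ.symm) = id := by ext y; simp
      rw [this, Finset.image_id]
    have hT₀S : (T₀ : Set X) ⊆ S := by
      intro x hx
      obtain ⟨y, hy, rfl⟩ := Finset.mem_image.1 hx
      obtain ⟨u, hu, rfl⟩ := hT hy
      simpa using hu
    have hsum : ∑ y ∈ T, c y • y = φ (∑ x ∈ T₀, c (φ x) • x) := by
      rw [hTT, Finset.sum_image (fun a _ b _ hab => φ.injective hab), map_sum]
      simp [map_smul]
    rw [hsum]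
    have horr := h.2 T₀ hT₀S (fun x => c (φ x))
    have hRHS : (T.filter fun v => c v ≠ 0).sup ℓ'
        = (T₀.filter fun v => c (φ v) ≠ 0).sup (fun x => ℓ' (φ x)) := by
      rw [hTT, Finset.filter_image, Finset.sup_image]
      rfl
    rw [hRHS]
    exact horr

end Aux

/-- Given filtered vector spaces `(X, ℓ)` and `(Y, ℓ')` with well-ordered value sets and
a linear isomorphism `φ : X → Y`, there is an `ℓ`-orthogonal basis `S` of `X` such that
`φ(S)` is an `ℓ'`-orthogonal basis of `Y`. -/
theorem exists_orthogonal_basis_matching_iso (κ : Type u) [Field κ] {X Y : Type v}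
    [AddCommGroup X] [Module κ X] [AddCommGroup Y] [Module κ Y]
    (ℓ : X → WithBot ℝ) (ℓ' : Y → WithBot ℝ)
    (hX : IsFiltrationFun κ ℓ) (hY : IsFiltrationFun κ ℓ')
    (hwX : WellOrderedSubset {t : ℝ | ∃ v : X, v ≠ 0 ∧ ℓ v = (t : WithBot ℝ)})
    (hwY : WellOrderedSubset {t : ℝ | ∃ v : Y, v ≠ 0 ∧ ℓ' v = (t : WithBot ℝ)})
    (φ : X ≃ₗ[κ] Y) :
    ∃ S : Set X,
      IsOrthogonal κ ℓ S ∧ LinearIndependent κ (fun x : S => (x : X)) ∧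
        Submodule.span κ S = ⊤ ∧
      IsOrthogonal κ ℓ' (⇑φ '' S) ∧
        LinearIndependent κ (fun y : ↥(⇑φ '' S) => (y : Y)) ∧
        Submodule.span κ (⇑φ '' S) = ⊤ := by
  classical
  set m : X → WithBot ℝ := fun x => ℓ' (φ x) with hmdef
  have hmf : IsFiltrationFun κ m := by
    refine ⟨fun v => ?_, fun c v hc => ?_, fun v w => ?_⟩
    · rw [hmdef]
      exact (hY.1 (φ v)).trans φ.map_eq_zero_iff
    · simp only [hmdef, map_smul]
      exact hY.2.1 c (φ v) hc
    · simp only [hmdef, map_add]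
      exact hY.2.2 (φ v) (φ w)
  have hsets : {t : ℝ | ∃ v : X, v ≠ 0 ∧ m v = (t : WithBot ℝ)}
      = {t : ℝ | ∃ v : Y, v ≠ 0 ∧ ℓ' v = (t : WithBot ℝ)} := by
    ext t
    constructor
    · rintro ⟨v, hv, hvt⟩
      exact ⟨φ v, fun h => hv (φ.map_eq_zero_iff.1 h), hvt⟩
    · rintro ⟨y, hy, hyt⟩
      refine ⟨φ.symm y, fun h => hy ?_, ?_⟩
      · have := congrArg φ h
        simpa using this
      · simp only [hmdef, LinearEquiv.apply_symm_apply]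
        exact hyt
  have hwm : WellOrderedSubset {t : ℝ | ∃ v : X, v ≠ 0 ∧ m v = (t : WithBot ℝ)} := by
    rw [hsets]; exact hwY
  obtain ⟨S, hoℓ, hom, hli, hspan⟩ := exists_common hX hmf hwX hwm
  have horth' : IsOrthogonal κ ℓ' (⇑φ '' S) := orth_image φ ℓ' S hom
  refine ⟨S, hoℓ, hli, hspan, horth', orth_linearIndependent (⇑φ '' S) horth' hY, ?_⟩
  have himg : ⇑φ '' S = ⇑(φ.toLinearMap) '' S := rfl
  rw [himg, Submodule.span_image, hspan, Submodule.map_top, LinearMap.range_eq_top]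
  exact φ.surjective
end

section
/- For any extended pseudometric space (X, d), any subset Δ ⊆ X, and any multisets s : I → X and t : J → X of elements of X, the bottleneck distance equals the maximum of the two bottleneck hemidistances: d_∞^{Δ}(s, t) = max(δ_∞^{Δ}(s, t), δ_∞^{Δ}(t, s)). -/
open scoped Classical ENNReal

universe u v w

/-- An `ε`-matching between the multisets `s : I → X` and `t : J → X` relative to `Δ`. -/
def IsMatching {X : Type u} (dX : X → X → ℝ≥0∞) (Δ : Set X) {I : Type v} {J : Type w}
    (s : I → X) (t : J → X) (ε : ℝ≥0∞) : Prop :=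
  ∃ (I' : Set I) (J' : Set J) (σ : I' → J'),
    Function.Bijective σ ∧
    (∀ i : I', dX (s ↑i) (t ↑(σ i)) ≤ ε) ∧
    (∀ i : I, i ∉ I' → ∃ y ∈ Δ, dX (s i) y ≤ ε) ∧
    ∀ j : J, j ∉ J' → ∃ y ∈ Δ, dX (t j) y ≤ ε

/-- An `ε`-embedding of the multiset `s : I → X` into `t : J → X` relative to `Δ`. -/
def IsEmbeddingInto {X : Type u} (dX : X → X → ℝ≥0∞) (Δ : Set X) {I : Type v} {J : Type w}
    (s : I → X) (t : J → X) (ε : ℝ≥0∞) : Prop :=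
  ∃ (I' : Set I) (σ : I' → J),
    Function.Injective σ ∧
    (∀ i : I', dX (s ↑i) (t (σ i)) ≤ ε) ∧
    ∀ i : I, i ∉ I' → ∃ y ∈ Δ, dX (s i) y ≤ ε

/-- The bottleneck distance relative to `Δ`. -/
noncomputable def bottleneckDist {X : Type u} (dX : X → X → ℝ≥0∞) (Δ : Set X)
    {I : Type v} {J : Type w} (s : I → X) (t : J → X) : ℝ≥0∞ :=
  sInf {ε : ℝ≥0∞ | IsMatching dX Δ s t ε}

/-- The bottleneck hemidistance relative to `Δ`. -/
noncomputable def bottleneckHemi {X : Type u} (dX : X → X → ℝ≥0∞) (Δ : Set X)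
    {I : Type v} {J : Type w} (s : I → X) (t : J → X) : ℝ≥0∞ :=
  sInf {ε : ℝ≥0∞ | IsEmbeddingInto dX Δ s t ε}

lemma emb_of_matching {X : Type u} (dX : X → X → ℝ≥0∞) (Δ : Set X) {I : Type v} {J : Type w}
    (s : I → X) (t : J → X) (ε : ℝ≥0∞) (h : IsMatching dX Δ s t ε) :
    IsEmbeddingInto dX Δ s t ε := by
  obtain ⟨I', J', σ, hbij, hd, hI, hJ⟩ := h
  exact ⟨I', fun i => ↑(σ i), fun a b hab => hbij.1 (Subtype.ext hab), hd, hI⟩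

lemma emb_of_matching' {X : Type u} (dX : X → X → ℝ≥0∞) (hsymm : ∀ x y, dX x y = dX y x)
    (Δ : Set X) {I : Type v} {J : Type w}
    (s : I → X) (t : J → X) (ε : ℝ≥0∞) (h : IsMatching dX Δ s t ε) :
    IsEmbeddingInto dX Δ t s ε := by
  obtain ⟨I', J', σ, hbij, hd, hI, hJ⟩ := h
  let e := Equiv.ofBijective σ hbij
  refine ⟨J', fun j => ↑(e.symm j), fun a b hab => e.symm.injective (Subtype.ext hab),
    fun j => ?_, hJ⟩
  have := hd (e.symm j)
  have hj : σ (e.symm j) = j := e.apply_symm_apply j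
  rw [hj] at this
  rw [hsymm]
  exact this

lemma matching_of_embs {X : Type u} (dX : X → X → ℝ≥0∞) (hsymm : ∀ x y, dX x y = dX y x)
    (Δ : Set X) {I : Type v} {J : Type w} (s : I → X) (t : J → X) (ε : ℝ≥0∞)
    (h1 : IsEmbeddingInto dX Δ s t ε) (h2 : IsEmbeddingInto dX Δ t s ε) :
    IsMatching dX Δ s t ε := by
  classical
  obtain ⟨I', σ, hσinj, hσd, hσΔ⟩ := h1
  obtain ⟨J'', τ, hτinj, hτd, hτΔ⟩ := h2
  -- levels of the Schröder–Bernstein construction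
  let C : ℕ → Set I := fun n => Nat.rec {i | ∀ j : J'', τ j ≠ i}
    (fun _ Cn => {i | ∃ j : J'', τ j = i ∧ ∃ i' : I', (i' : I) ∈ Cn ∧ σ i' = ↑j}) n
  have hC0 : C 0 = {i | ∀ j : J'', τ j ≠ i} := rfl
  have hCsucc : ∀ n, C (n + 1) =
      {i | ∃ j : J'', τ j = i ∧ ∃ i' : I', (i' : I) ∈ C n ∧ σ i' = ↑j} := fun n => rfl
  set Cs : Set I := ⋃ n, C n with hCs
  have hmemCs : ∀ {i n}, i ∈ C n → i ∈ Cs := fun {i n} h => Set.mem_iUnion.2 ⟨n, h⟩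
  have hchoice : ∀ i : I, i ∉ Cs → ∃ j : J'', τ j = i := by
    intro i hi
    by_contra hc
    push_neg at hc
    exact hi (hmemCs (n := 0) hc)
  -- domain of the matching
  set I₀ : Set I := {i | i ∈ Cs → i ∈ I'} with hI₀
  -- the matching map
  have hmem' : ∀ (i : I₀), (i : I) ∈ Cs → (i : I) ∈ I' := fun i => i.2
  let μ : I₀ → J := fun i =>
    if h : (i : I) ∈ Cs then σ ⟨i, i.2 h⟩ else ↑((hchoice i h).choose)
  have hμ_pos : ∀ (i : I₀) (h : (i : I) ∈ Cs), μ i = σ ⟨i, i.2 h⟩ := by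
    intro i h; simp only [μ, dif_pos h]
  have hμ_neg : ∀ (i : I₀) (h : (i : I) ∉ Cs), μ i = ↑((hchoice i h).choose) := by
    intro i h; simp only [μ, dif_neg h]
  -- key: if a ∈ Cs and σ of a equals a j in J'', then τ j ∈ Cs
  have hkey : ∀ (a : I') (j : J''), (a : I) ∈ Cs → σ a = ↑j → (τ j : I) ∈ Cs := by
    rintro a j ha hj
    obtain ⟨n, hn⟩ := Set.mem_iUnion.1 ha
    exact hmemCs (n := n + 1) ⟨j, rfl, a, hn, hj⟩
  have hμinj : Function.Injective μ := by
    rintro ⟨a, ha⟩ ⟨b, hb⟩ hab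
    by_cases hA : a ∈ Cs <;> by_cases hB : b ∈ Cs
    · rw [hμ_pos ⟨a, ha⟩ hA, hμ_pos ⟨b, hb⟩ hB] at hab
      have h2 : a = b := congrArg Subtype.val (hσinj hab)
      exact Subtype.ext h2
    · exfalso
      rw [hμ_pos ⟨a, ha⟩ hA, hμ_neg ⟨b, hb⟩ hB] at hab
      have hτ := (hchoice b hB).choose_spec
      exact hB (hτ ▸ hkey _ _ hA hab)
    · exfalso
      rw [hμ_neg ⟨a, ha⟩ hA, hμ_pos ⟨b, hb⟩ hB] at hab
      have hτ := (hchoice a hA).choose_spec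
      exact hA (hτ ▸ hkey _ _ hB hab.symm)
    · rw [hμ_neg ⟨a, ha⟩ hA, hμ_neg ⟨b, hb⟩ hB] at hab
      have hτa := (hchoice a hA).choose_spec
      have hτb := (hchoice b hB).choose_spec
      have h2 : (hchoice a hA).choose = (hchoice b hB).choose := Subtype.ext hab
      have h3 := congrArg τ h2
      rw [hτa, hτb] at h3
      exact Subtype.ext h3
  refine ⟨I₀, Set.range μ, Set.rangeFactorization μ, ⟨?_, ?_⟩, ?_, ?_, ?_⟩
  · intro a b hab
    exact hμinj (congrArg Subtype.val hab)
  · exact Set.rangeFactorization_surjective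
  · intro i
    by_cases h : (i : I) ∈ Cs
    · have := hσd ⟨i, i.2 h⟩
      simpa [Set.rangeFactorization, hμ_pos i h] using this
    · have hτ := (hchoice i h).choose_spec
      have := hτd (hchoice i h).choose
      rw [hτ] at this
      rw [hsymm] at this
      simpa [Set.rangeFactorization, hμ_neg i h] using this
  · intro i hi
    simp only [hI₀, Set.mem_setOf_eq, not_forall] at hi
    exact hσΔ i hi.2
  · intro j hj
    by_cases hJ : j ∈ J''
    · exfalso
      apply hj
      by_cases hc : (τ ⟨j, hJ⟩ : I) ∈ Cs
      · -- walk down one level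
        obtain ⟨n, hn⟩ := Set.mem_iUnion.1 hc
        cases n with
        | zero => exact absurd rfl (hn ⟨j, hJ⟩)
        | succ m =>
          obtain ⟨j₂, hj₂, i', hi'Cm, hσi'⟩ := hn
          have hjj : j₂ = ⟨j, hJ⟩ := hτinj hj₂
          have hi'Cs : (i' : I) ∈ Cs := hmemCs hi'Cm
          have hi'I₀ : (i' : I) ∈ I₀ := fun _ => i'.2
          refine ⟨⟨i', hi'I₀⟩, ?_⟩
          rw [hμ_pos ⟨i', hi'I₀⟩ hi'Cs]
          have : (⟨(i' : I), i'.2⟩ : I') = i' := rfl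
          rw [this, hσi', hjj]
      · have hI₀mem : (τ ⟨j, hJ⟩ : I) ∈ I₀ := fun h => absurd h hc
        refine ⟨⟨τ ⟨j, hJ⟩, hI₀mem⟩, ?_⟩
        rw [hμ_neg _ hc]
        have hτ := (hchoice (τ ⟨j, hJ⟩) hc).choose_spec
        have : (hchoice (τ ⟨j, hJ⟩) hc).choose = ⟨j, hJ⟩ := hτinj hτ
        rw [this]
    · exact hτΔ j hJ


lemma emb_mono {X : Type u} (dX : X → X → ℝ≥0∞) (Δ : Set X) {I : Type v} {J : Type w}
    (s : I → X) (t : J → X) {ε ε' : ℝ≥0∞} (hεε : ε ≤ ε')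
    (h : IsEmbeddingInto dX Δ s t ε) : IsEmbeddingInto dX Δ s t ε' := by
  obtain ⟨I', σ, hinj, hd, hΔ⟩ := h
  exact ⟨I', σ, hinj, fun i => (hd i).trans hεε,
    fun i hi => (hΔ i hi).imp fun y ⟨hy, hdy⟩ => ⟨hy, hdy.trans hεε⟩⟩

/-- For an extended pseudometric space `(X, dX)`, a subset `Δ ⊆ X`, and multisets
`s : I → X`, `t : J → X`, the bottleneck distance equals the maximum of the two
bottleneck hemidistances. -/
theorem bottleneckDist_eq_max_hemi {X : Type u} (dX : X → X → ℝ≥0∞)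
    (hrefl : ∀ x, dX x x = 0) (hsymm : ∀ x y, dX x y = dX y x)
    (htri : ∀ x y z, dX x z ≤ dX x y + dX y z) (Δ : Set X)
    {I : Type v} {J : Type w} (s : I → X) (t : J → X) :
    bottleneckDist dX Δ s t = max (bottleneckHemi dX Δ s t) (bottleneckHemi dX Δ t s) := by
  apply le_antisymm
  · apply le_of_forall_gt_imp_ge_of_dense
    intro ε hε
    rw [max_lt_iff] at hε
    obtain ⟨ε₁, hε₁mem, hε₁lt⟩ := sInf_lt_iff.1 hε.1
    obtain ⟨ε₂, hε₂mem, hε₂lt⟩ := sInf_lt_iff.1 hε.2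
    have h1 : IsEmbeddingInto dX Δ s t ε := emb_mono dX Δ s t hε₁lt.le hε₁mem
    have h2 : IsEmbeddingInto dX Δ t s ε := emb_mono dX Δ t s hε₂lt.le hε₂mem
    exact sInf_le (matching_of_embs dX hsymm Δ s t ε h1 h2)
  · apply max_le
    · exact le_sInf fun ε hε => sInf_le (emb_of_matching dX Δ s t ε hε)
    · exact le_sInf fun ε hε => sInf_le (emb_of_matching' dX hsymm Δ s t ε hε)
end

section
/- Let S and T be sets, let S′ ⊆ S and T′ ⊆ T, and let f : S′ → T and g : T′ → S be injective functions. Then there exist sets S″ and T″ with S′ ⊆ S″ ⊆ S′ ∪ g(T′) and T′ ⊆ T″ ⊆ T, together with a bijection h : S″ → T″, such that for every x ∈ S″ either x ∈ S′ and h(x) = f(x), or h(x) ∈ T′ and g(h(x)) = x. -/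
universe u v

/-- A refined Schröder–Bernstein theorem: given injections `f : S' → T` and
`g : T' → S` (with `S' ⊆ S`, `T' ⊆ T`), there are intermediate sets
`S' ⊆ S'' ⊆ S' ∪ g(T')` and `T' ⊆ T'' ⊆ T` and a bijection `h : S'' → T''` such
that each `x ∈ S''` is matched either via `f` (with `x ∈ S'` and `h x = f x`) or
via `g` (with `h x ∈ T'` and `g (h x) = x`). -/
theorem refined_schroeder_bernstein {S : Type u} {T : Type v} (S' : Set S) (T' : Set T)
    (f : S' → T) (g : T' → S) (hf : Function.Injective f) (hg : Function.Injective g) :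
    ∃ (S'' : Set S) (T'' : Set T),
      S' ⊆ S'' ∧ S'' ⊆ S' ∪ Set.range g ∧ T' ⊆ T'' ∧ T'' ⊆ Set.univ ∧
      ∃ h : S'' → T'', Function.Bijective h ∧
        ∀ x : S'',
          (∃ hx : (x : S) ∈ S', (h x : T) = f ⟨x, hx⟩) ∨
          (∃ hy : (h x : T) ∈ T', g ⟨h x, hy⟩ = (x : S)) := by
  classical
  -- image operations
  set fi : Set S → Set T := fun A => f '' (Subtype.val ⁻¹' A) with hfi
  set gi : Set T → Set S := fun B => g '' (Subtype.val ⁻¹' B) with hgi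
  have fi_mono : Monotone fi := fun A A' hAA' =>
    Set.image_mono (Set.preimage_mono hAA')
  have gi_mono : Monotone gi := fun B B' hBB' =>
    Set.image_mono (Set.preimage_mono hBB')
  -- the monotone operator
  set Φ : Set S →o Set S :=
    ⟨fun A => S' \ gi (T' \ fi A), by
      intro A A' hAA'
      exact Set.diff_subset_diff_right (gi_mono (Set.diff_subset_diff_right (fi_mono hAA')))⟩
    with hΦ
  set A : Set S := OrderHom.lfp Φ with hAdef
  have hA : S' \ gi (T' \ fi A) = A := OrderHom.map_lfp Φ
  set B : Set T := T' \ fi A with hBdef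
  have hAeq : A = S' \ gi B := hA.symm
  have hAS' : A ⊆ S' := by rw [hAeq]; exact Set.diff_subset
  have hBT' : B ⊆ T' := Set.diff_subset
  have hAg : Disjoint A (gi B) := by
    rw [hAeq]; exact Set.disjoint_sdiff_left
  have hBf : Disjoint B (fi A) := Set.disjoint_sdiff_left
  refine ⟨A ∪ gi B, fi A ∪ B, ?_, ?_, ?_, ?_, ?_⟩
  · -- S' ⊆ S''
    intro x hx
    by_cases hxg : x ∈ gi B
    · exact Or.inr hxg
    · exact Or.inl (by rw [hAeq]; exact ⟨hx, hxg⟩)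
  · -- S'' ⊆ S' ∪ range g
    intro x hx
    rcases hx with hx | hx
    · exact Or.inl (hAS' hx)
    · rcases hx with ⟨t, _, rfl⟩
      exact Or.inr ⟨t, rfl⟩
  · -- T' ⊆ T''
    intro t ht
    by_cases htf : t ∈ fi A
    · exact Or.inl htf
    · exact Or.inr ⟨ht, htf⟩
  · exact Set.subset_univ _
  -- the bijection
  · have memgi : ∀ x : (A ∪ gi B : Set S), (x : S) ∉ A → (x : S) ∈ gi B := fun x hx =>
      x.2.resolve_left hx
    let h0 : (A ∪ gi B : Set S) → (fi A ∪ B : Set T) := fun x =>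
      if hx : (x : S) ∈ A then
        ⟨f ⟨x, hAS' hx⟩, Or.inl ⟨⟨x, hAS' hx⟩, hx, rfl⟩⟩
      else
        ⟨((memgi x hx).choose : T), Or.inr (memgi x hx).choose_spec.1⟩
    have hpos : ∀ (x : (A ∪ gi B : Set S)) (hx : (x : S) ∈ A),
        (h0 x : T) = f ⟨x, hAS' hx⟩ := by
      intro x hx
      simp only [h0, dif_pos hx]
    have hneg : ∀ (x : (A ∪ gi B : Set S)) (hx : (x : S) ∉ A),
        (h0 x : T) ∈ B ∧ ∀ ht : (h0 x : T) ∈ T', g ⟨h0 x, ht⟩ = (x : S) := by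
      intro x hx
      simp only [h0, dif_neg hx]
      refine ⟨(memgi x hx).choose_spec.1, fun ht => ?_⟩
      rw [Subtype.coe_eta]
      exact (memgi x hx).choose_spec.2
    refine ⟨h0, ⟨?_, ?_⟩, ?_⟩
    · -- injective
      intro x₁ x₂ hEq
      have hv : (h0 x₁ : T) = (h0 x₂ : T) := congrArg Subtype.val hEq
      by_cases h1 : (x₁ : S) ∈ A <;> by_cases h2 : (x₂ : S) ∈ A
      · rw [hpos x₁ h1, hpos x₂ h2] at hv
        have h' := hf hv
        exact Subtype.ext (Subtype.mk_eq_mk.mp h')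
      · rw [hpos x₁ h1] at hv
        have hb := (hneg x₂ h2).1
        rw [← hv] at hb
        exact absurd ⟨⟨x₁, hAS' h1⟩, h1, rfl⟩ (fun hfa => hBf.ne_of_mem hb hfa rfl)
      · rw [hpos x₂ h2] at hv
        have hb := (hneg x₁ h1).1
        rw [hv] at hb
        exact absurd ⟨⟨x₂, hAS' h2⟩, h2, rfl⟩ (fun hfa => hBf.ne_of_mem hb hfa rfl)
      · have ht1 : (h0 x₁ : T) ∈ T' := hBT' (hneg x₁ h1).1
        have ht2 : (h0 x₂ : T) ∈ T' := hBT' (hneg x₂ h2).1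
        have e1 := (hneg x₁ h1).2 ht1
        have e2 := (hneg x₂ h2).2 ht2
        have : (⟨h0 x₁, ht1⟩ : T') = ⟨h0 x₂, ht2⟩ := Subtype.ext hv
        rw [this, e2] at e1
        exact Subtype.ext e1.symm
    · -- surjective
      intro y
      rcases y.2 with hy | hy
      · rcases hy with ⟨x, hxA, hxy⟩
        refine ⟨⟨x, Or.inl hxA⟩, ?_⟩
        apply Subtype.ext
        rw [hpos ⟨x, Or.inl hxA⟩ hxA]
        show f _ = (y : T)
        rw [← hxy, Subtype.coe_eta]
      · have hyT' : (y : T) ∈ T' := hBT' hy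
        have hxgi : g ⟨y, hyT'⟩ ∈ gi B := ⟨⟨y, hyT'⟩, hy, rfl⟩
        have hxA : g ⟨y, hyT'⟩ ∉ A := fun hA' => hAg.ne_of_mem hA' hxgi rfl
        refine ⟨⟨g ⟨y, hyT'⟩, Or.inr hxgi⟩, ?_⟩
        have ht : (h0 ⟨g ⟨y, hyT'⟩, Or.inr hxgi⟩ : T) ∈ T' :=
          hBT' (hneg _ hxA).1
        have e := (hneg ⟨g ⟨y, hyT'⟩, Or.inr hxgi⟩ hxA).2 ht
        have := hg (e : g _ = g ⟨y, hyT'⟩)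
        exact Subtype.ext (Subtype.mk_eq_mk.mp this)
    · -- matching condition
      intro x
      by_cases hx : (x : S) ∈ A
      · exact Or.inl ⟨hAS' hx, hpos x hx⟩
      · exact Or.inr ⟨hBT' (hneg x hx).1, (hneg x hx).2 _⟩
end
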